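/- arXiv:1912.03220 — 5 statements merged into one kernel-verified Lean document; each statement's English description precedes it below -/
import Mathlib

section
/- Let F_t = {f_{(i,t)}(x) := t·f_i(x) + q_i : 1 ≤ i ≤ N} be a one-parameter affine family on ℝ^d with joint spectral radius ρ(F) > 0 and t_0 := 1/ρ(F). Then for every t with 0 ≤ t < t_0 the IFS F_t has an attractor A_t, and for every t ≥ t_0 the IFS F_t has no attractor. In other words, t_0 = 1/ρ(F) is the threshold for the existence of the attractor. -/
open Metric Filter Set
open scoped RealInnerProductSpace

noncomputable section

/-- The Hutchinson operator associated with a family of maps. -/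
def hutch {ι E : Type*} (f : ι → E → E) (K : Set E) : Set E := ⋃ i, f i '' K

/-- `A` is the attractor of the IFS `f`: `A` is a nonempty compact set such that the iterates
of the Hutchinson operator applied to any nonempty compact set converge to `A` in the
Hausdorff metric. -/
def IsAttractor {ι E : Type*} [MetricSpace E] (f : ι → E → E) (A : Set E) : Prop :=
  A.Nonempty ∧ IsCompact A ∧
    ∀ K : Set E, K.Nonempty → IsCompact K →
      Tendsto (fun n : ℕ => hausdorffDist ((hutch f)^[n] K) A) atTop (nhds 0)

/-- The joint spectral radius of a finite family of continuous linear maps. -/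
def jsr {E : Type*} [NormedAddCommGroup E] [NormedSpace ℝ E] {N : ℕ}
    (L : Fin N → E →L[ℝ] E) : ℝ :=
  limsup (fun k : ℕ =>
    (⨆ σ : Fin k → Fin N, ‖(List.ofFn fun j : Fin k => L (σ j)).prod‖) ^ ((1 : ℝ) / (k : ℝ)))
    atTop

/-- The one-parameter affine family `f_{(i,t)}(x) = t • f_i(x) + q_i` where
`f_i(x) = L_i x + a_i`. -/
def fam {E : Type*} [NormedAddCommGroup E] [NormedSpace ℝ E] {N : ℕ}
    (L : Fin N → E →L[ℝ] E) (a q : Fin N → E) (t : ℝ) (i : Fin N) (x : E) : E :=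
  t • (L i x + a i) + q i

/-- The family is linear: every `f_{(i,t)}`, `t ∈ [0, t₀)`, is conjugate to a linear map by a
single invertible affine map `h` independent of `i` and `t`. -/
def IsLinearFamily {E : Type*} [NormedAddCommGroup E] [NormedSpace ℝ E] {N : ℕ}
    (L : Fin N → E →L[ℝ] E) (a q : Fin N → E) : Prop :=
  ∃ h : E ≃ᵃ[ℝ] E, ∀ i : Fin N, ∀ t : ℝ, 0 ≤ t → t < 1 / jsr L →
    ∃ M : E →ₗ[ℝ] E, ∀ x, fam L a q t i x = h.symm (M (h x))

/-- The family is quasi-linear: for each `t ∈ [0, t₀)` there is an invertible affine map `h_t`,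
independent of `i`, conjugating every `f_{(i,t)}` to a linear map. -/
def IsQuasiLinearFamily {E : Type*} [NormedAddCommGroup E] [NormedSpace ℝ E] {N : ℕ}
    (L : Fin N → E →L[ℝ] E) (a q : Fin N → E) : Prop :=
  ∀ t : ℝ, 0 ≤ t → t < 1 / jsr L → ∃ h : E ≃ᵃ[ℝ] E, ∀ i : Fin N,
    ∃ M : E →ₗ[ℝ] E, ∀ x, fam L a q t i x = h.symm (M (h x))

/-- The family is semi-linear: for each `i` there is an invertible affine map `h_i`,
independent of `t`, conjugating `f_{(i,t)}` to a linear map for all `t ∈ [0, t₀)`. -/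
def IsSemiLinearFamily {E : Type*} [NormedAddCommGroup E] [NormedSpace ℝ E] {N : ℕ}
    (L : Fin N → E →L[ℝ] E) (a q : Fin N → E) : Prop :=
  ∀ i : Fin N, ∃ h : E ≃ᵃ[ℝ] E, ∀ t : ℝ, 0 ≤ t → t < 1 / jsr L →
    ∃ M : E →ₗ[ℝ] E, ∀ x, fam L a q t i x = h.symm (M (h x))

/-- The hyperplane `{x | φ x = c}` (with `φ` a nonzero linear functional) separates `S`:
it misses `S` and `S` meets both open half-spaces. -/
def SeparatesHyp {E : Type*} [AddCommGroup E] [Module ℝ E]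
    (φ : E →ₗ[ℝ] ℝ) (c : ℝ) (S : Set E) : Prop :=
  φ ≠ 0 ∧ (∀ x ∈ S, φ x ≠ c) ∧ (∃ x ∈ S, φ x < c) ∧ (∃ x ∈ S, c < φ x)

/-- A set is strongly disconnected if some hyperplane separates it. -/
def StronglyDisconnected {E : Type*} [AddCommGroup E] [Module ℝ E] (S : Set E) : Prop :=
  ∃ (φ : E →ₗ[ℝ] ℝ) (c : ℝ), SeparatesHyp φ c S

/-- A set is weakly connected if no hyperplane separates it. -/
def WeaklyConnected {E : Type*} [AddCommGroup E] [Module ℝ E] (S : Set E) : Prop :=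
  ¬ StronglyDisconnected S

/-- A weak component of a compact set `S` is a maximal weakly connected compact subset of `S`. -/
def IsWeakComponent {E : Type*} [NormedAddCommGroup E] [NormedSpace ℝ E]
    (S C : Set E) : Prop :=
  C.Nonempty ∧ C ⊆ S ∧ IsCompact C ∧ WeaklyConnected C ∧
    ∀ C' : Set E, C' ⊆ S → IsCompact C' → WeaklyConnected C' → C ⊆ C' → C' = C

/-- A (nondegenerate right circular) cone with apex `x`, axis direction `v`, radius `r` and
half-angle `θ`. -/
def coneSet {E : Type*} [NormedAddCommGroup E] [InnerProductSpace ℝ E]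
    (x v : E) (r θ : ℝ) : Set E :=
  {y | ‖y - x‖ ≤ r ∧ ‖y - x‖ * Real.cos θ ≤ ⟪y - x, v⟫}

/-- A boundary point `x` of `K` is a cusp of `K` if no cone with apex `x` is contained in `K`. -/
def IsCuspPoint {E : Type*} [NormedAddCommGroup E] [InnerProductSpace ℝ E]
    (K : Set E) (x : E) : Prop :=
  x ∈ frontier K ∧ ∀ (v : E) (r θ : ℝ), ‖v‖ = 1 → 0 < r → 0 < θ → θ < Real.pi / 2 →
    ¬ coneSet x v r θ ⊆ K

/-- The one-parameter family is tame: whenever the attractor `A_t` has nonempty interior,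
some fixed point of a map of `F_t` is not a cusp of `A_t`. -/
def TameFamily {E : Type*} [NormedAddCommGroup E] [InnerProductSpace ℝ E] {N : ℕ}
    (L : Fin N → E →L[ℝ] E) (a q : Fin N → E) : Prop :=
  ∀ t : ℝ, 0 ≤ t → t < 1 / jsr L → ∀ A : Set E, IsAttractor (fam L a q t) A →
    (interior A).Nonempty → ∃ (i : Fin N) (x : E), fam L a q t i x = x ∧ ¬ IsCuspPoint A x

end

set_option linter.unusedSectionVars false
noncomputable section Aux

namespace Stmt0Aux

variable {E : Type*} [NormedAddCommGroup E] [NormedSpace ℝ E] {N : ℕ}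

/-- The product of the linear parts along a word. -/
def wordProd (L : Fin N → E →L[ℝ] E) {k : ℕ} (σ : Fin k → Fin N) : E →L[ℝ] E :=
  (List.ofFn fun j : Fin k => L (σ j)).prod

/-- `sn L k` is the sup of `‖wordProd L σ‖` over words of length `k`. -/
def sn (L : Fin N → E →L[ℝ] E) (k : ℕ) : ℝ :=
  ⨆ σ : Fin k → Fin N, ‖wordProd L σ‖

lemma jsr_eq (L : Fin N → E →L[ℝ] E) :
    jsr L = Filter.limsup (fun k : ℕ => sn L k ^ ((1 : ℝ) / (k : ℝ))) Filter.atTop := rfl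

lemma wordProd_zero (L : Fin N → E →L[ℝ] E) (σ : Fin 0 → Fin N) :
    wordProd L σ = 1 := by simp [wordProd]

lemma wordProd_succ (L : Fin N → E →L[ℝ] E) {k : ℕ} (σ : Fin (k + 1) → Fin N) :
    wordProd L σ = L (σ 0) * wordProd L (Fin.tail σ) := by
  simp [wordProd, List.ofFn_succ, Fin.tail]

variable (hN : 2 ≤ N)
include hN

lemma nonempty_words (k : ℕ) : Nonempty (Fin k → Fin N) :=
  ⟨fun _ => ⟨0, by omega⟩⟩

lemma norm_wordProd_le_sn (L : Fin N → E →L[ℝ] E) {k : ℕ} (σ : Fin k → Fin N) :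
    ‖wordProd L σ‖ ≤ sn L k := by
  exact le_ciSup (Set.Finite.bddAbove (Set.finite_range fun τ => ‖wordProd L τ‖)) σ

lemma sn_nonneg (L : Fin N → E →L[ℝ] E) (k : ℕ) : 0 ≤ sn L k := by
  obtain ⟨σ⟩ := nonempty_words hN k
  exact le_trans (norm_nonneg _) (norm_wordProd_le_sn hN L σ)

lemma sn_le (L : Fin N → E →L[ℝ] E) {k : ℕ} {b : ℝ}
    (h : ∀ σ : Fin k → Fin N, ‖wordProd L σ‖ ≤ b) : sn L k ≤ b := by
  have : Nonempty (Fin k → Fin N) := nonempty_words hN k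
  exact ciSup_le h

lemma sn_submul (L : Fin N → E →L[ℝ] E) (m k : ℕ) :
    sn L (m + k) ≤ sn L m * sn L k := by
  apply sn_le hN
  intro σ
  have hsplit : wordProd L σ =
      wordProd L (fun i : Fin m => σ (Fin.castAdd k i)) *
        wordProd L (fun j : Fin k => σ (Fin.natAdd m j)) := by
    simp [wordProd, List.ofFn_add]; rfl
  rw [hsplit]
  calc ‖_ * _‖ ≤ ‖wordProd L (fun i : Fin m => σ (Fin.castAdd k i))‖ *
        ‖wordProd L (fun j : Fin k => σ (Fin.natAdd m j))‖ := norm_mul_le _ _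
    _ ≤ sn L m * sn L k := by
        apply mul_le_mul (norm_wordProd_le_sn hN L _) (norm_wordProd_le_sn hN L _)
          (norm_nonneg _) (sn_nonneg hN L m)

lemma wordProd_bijective {L : Fin N → E →L[ℝ] E} (hL : ∀ i, Function.Bijective (L i))
    {k : ℕ} (σ : Fin k → Fin N) : Function.Bijective (wordProd L σ) := by
  clear hN
  induction k with
  | zero => simpa [wordProd_zero] using Function.bijective_id
  | succ k ih =>
      rw [wordProd_succ]
      have : ⇑(L (σ 0) * wordProd L (Fin.tail σ)) =
          ⇑(L (σ 0)) ∘ ⇑(wordProd L (Fin.tail σ)) := rfl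
      rw [this]
      exact (hL (σ 0)).comp (ih (Fin.tail σ))

lemma jsr_eq_zero_of_subsingleton (L : Fin N → E →L[ℝ] E) (hE : Subsingleton E) :
    jsr L = 0 := by
  clear hN
  have h0 : ∀ k : ℕ, sn L k = 0 := by
    intro k
    have : ∀ σ : Fin k → Fin N, ‖wordProd L σ‖ = 0 := by
      intro σ
      have : wordProd L σ = 0 := by
        ext x
        exact Subsingleton.elim _ _
      simp [this]
    simp [sn, this]
  rw [jsr_eq]
  have hev : (fun k : ℕ => sn L k ^ ((1 : ℝ) / (k : ℝ))) =ᶠ[Filter.atTop] (fun _ => (0 : ℝ)) := by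
    filter_upwards [Filter.eventually_ge_atTop 1] with k hk
    rw [h0 k]
    exact Real.zero_rpow (by positivity)
  rw [Filter.limsup_congr hev, Filter.limsup_const]

lemma sn_pos {L : Fin N → E →L[ℝ] E} (hL : ∀ i, Function.Bijective (L i))
    (hρ : 0 < jsr L) (k : ℕ) : 0 < sn L k := by
  rcases subsingleton_or_nontrivial E with hE | hE
  · rw [jsr_eq_zero_of_subsingleton hN L hE] at hρ
    exact absurd hρ (lt_irrefl 0)
  · obtain ⟨σ⟩ := nonempty_words hN k
    refine lt_of_lt_of_le ?_ (norm_wordProd_le_sn hN L σ)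
    rw [norm_pos_iff]
    intro h0
    obtain ⟨x, y, hxy⟩ := exists_pair_ne E
    exact hxy ((wordProd_bijective hN hL σ).injective (by simp [h0]))

/-- The sequence `sn L k ^ (1/k)` is bounded above. -/
lemma u_bddAbove (L : Fin N → E →L[ℝ] E) (k : ℕ) :
    sn L k ^ ((1 : ℝ) / (k : ℝ)) ≤ max (sn L 1) 1 := by
  set C := max (sn L 1) 1 with hC
  have hC1 : (1 : ℝ) ≤ C := le_max_right _ _
  have hsn : ∀ m : ℕ, sn L m ≤ C ^ m := by
    intro m
    induction m with
    | zero =>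
        have : sn L 0 ≤ 1 := by
          have : sn L 0 = ‖(1 : E →L[ℝ] E)‖ := by
            obtain ⟨σ₀⟩ := nonempty_words hN 0
            have : ∀ σ : Fin 0 → Fin N, ‖wordProd L σ‖ = ‖(1 : E →L[ℝ] E)‖ := fun σ => by
              rw [wordProd_zero]
            simp [sn, this]
          rw [this, ContinuousLinearMap.one_def]
          exact ContinuousLinearMap.norm_id_le
        simpa using this
    | succ m ih =>
        have h1 : sn L (1 + m) ≤ sn L 1 * sn L m := sn_submul hN L 1 m
        have : sn L (m + 1) ≤ sn L 1 * sn L m := by rwa [Nat.add_comm] at h1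
        calc sn L (m + 1) ≤ sn L 1 * sn L m := this
          _ ≤ C * C ^ m := by
              apply mul_le_mul (le_max_left _ _) ih (sn_nonneg hN L m) (by linarith)
          _ = C ^ (m + 1) := by ring
  rcases Nat.eq_zero_or_pos k with hk | hk
  · subst hk; simpa using hC1
  · have h1 : sn L k ^ ((1 : ℝ) / (k : ℝ)) ≤ (C ^ k) ^ ((1 : ℝ) / (k : ℝ)) :=
      Real.rpow_le_rpow (sn_nonneg hN L k) (hsn k) (by positivity)
    refine h1.trans_eq ?_
    rw [← Real.rpow_natCast C k, ← Real.rpow_mul (by linarith)]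
    rw [mul_one_div, div_self (by positivity), Real.rpow_one]

/-- Part 1 key: below the threshold some iterate is contracting at the word level. -/
lemma exists_good_n {L : Fin N → E →L[ℝ] E} (hρ : 0 < jsr L) {t : ℝ}
    (ht0 : 0 ≤ t) (ht : t < 1 / jsr L) :
    ∃ n : ℕ, n ≠ 0 ∧ t ^ n * sn L n < 1 := by
  rcases eq_or_lt_of_le ht0 with h0 | h0
  · refine ⟨1, one_ne_zero, ?_⟩
    rw [← h0]
    simp
  · have hjt : jsr L < 1 / t := by
      rw [lt_div_iff₀ h0]
      calc jsr L * t = t * jsr L := mul_comm _ _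
        _ < (1 / jsr L) * jsr L := by
            exact mul_lt_mul_of_pos_right ht hρ
        _ = 1 := by field_simp
    have hbdd : Filter.IsBoundedUnder (· ≤ ·) Filter.atTop
        (fun k : ℕ => sn L k ^ ((1 : ℝ) / (k : ℝ))) :=
      ⟨max (sn L 1) 1, Filter.eventually_map.mpr
        (Filter.Eventually.of_forall fun k => u_bddAbove hN L k)⟩
    rw [jsr_eq] at hjt
    have hev := Filter.eventually_lt_of_limsup_lt hjt hbdd
    obtain ⟨n, hn1, hnlt⟩ := (hev.and (Filter.eventually_ge_atTop 1)).exists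
    refine ⟨n, by omega, ?_⟩
    have hne : n ≠ 0 := by omega
    have hsn : sn L n < (1 / t) ^ n := by
      have hpow : (sn L n ^ ((1 : ℝ) / (n : ℝ))) ^ n < (1 / t) ^ n := by
        apply pow_lt_pow_left₀ hn1 (Real.rpow_nonneg (sn_nonneg hN L n) _) hne
      rwa [one_div, Real.rpow_inv_natCast_pow (sn_nonneg hN L n) hne] at hpow
    calc t ^ n * sn L n < t ^ n * (1 / t) ^ n :=
          mul_lt_mul_of_pos_left hsn (by positivity)
      _ = (t * (1 / t)) ^ n := by rw [mul_pow]
      _ = 1 := by rw [mul_one_div, div_self (ne_of_gt h0), one_pow]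

/-- Part 2 key: at or above the threshold all word-level iterates are expansive. -/
lemma one_le_pow_mul_sn {L : Fin N → E →L[ℝ] E} (hL : ∀ i, Function.Bijective (L i))
    (hρ : 0 < jsr L) {t : ℝ} (ht : 1 / jsr L ≤ t) {n : ℕ} (hn : n ≠ 0) :
    1 ≤ t ^ n * sn L n := by
  have ht0 : 0 < t := lt_of_lt_of_le (by positivity) ht
  have hjt : 1 / t ≤ jsr L := by
    rw [div_le_iff₀ ht0]
    calc (1 : ℝ) = (1 / jsr L) * jsr L := by field_simp
      _ ≤ t * jsr L := mul_le_mul_of_nonneg_right ht hρ.le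
      _ = jsr L * t := mul_comm _ _
  by_contra hcon
  push_neg at hcon
  set θ := t ^ n * sn L n with hθdef
  have hθpos : 0 < θ := by
    have := sn_pos hN hL hρ n
    positivity
  have hnpos : 0 < n := Nat.pos_of_ne_zero hn
  set s' : ℕ → ℝ := fun k => t ^ k * sn L k with hs'def
  have hs'nonneg : ∀ k, 0 ≤ s' k := fun k =>
    mul_nonneg (by positivity) (sn_nonneg hN L k)
  have hs'sub : ∀ a b, s' (a + b) ≤ s' a * s' b := by
    intro a b
    have h1 : sn L (a + b) ≤ sn L a * sn L b := sn_submul hN L a b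
    calc s' (a + b) = t ^ a * t ^ b * sn L (a + b) := by simp only [hs'def]; rw [pow_add]
      _ ≤ t ^ a * t ^ b * (sn L a * sn L b) := by
          apply mul_le_mul_of_nonneg_left h1 (by positivity)
      _ = s' a * s' b := by rw [hs'def]; ring
  have hB : ∀ k r, s' (n * k + r) ≤ θ ^ k * s' r := by
    intro k
    induction k with
    | zero => intro r; simp
    | succ k ih =>
        intro r
        have harith : n * (k + 1) + r = n + (n * k + r) := by ring
        rw [harith]
        calc s' (n + (n * k + r)) ≤ s' n * s' (n * k + r) := hs'sub _ _
          _ ≤ s' n * (θ ^ k * s' r) := by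
              apply mul_le_mul_of_nonneg_left (ih r) (hs'nonneg n)
          _ = θ * (θ ^ k * s' r) := by rw [hs'def, hθdef]
          _ = θ ^ (k + 1) * s' r := by ring
  have hrangene : (Finset.range n).Nonempty := Finset.nonempty_range_iff.mpr hn
  set C : ℝ := max 1 ((Finset.range n).sup' hrangene s') with hCdef
  have hC1 : (1 : ℝ) ≤ C := le_max_left _ _
  have hCpos : 0 < C := lt_of_lt_of_le one_pos hC1
  have hCr : ∀ r, r < n → s' r ≤ C := by
    intro r hr
    exact le_trans (Finset.le_sup' s' (Finset.mem_range.mpr hr)) (le_max_right _ _)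
  have hs'm : ∀ m : ℕ, s' m ≤ θ ^ (m / n) * C := by
    intro m
    have hm : n * (m / n) + m % n = m := Nat.div_add_mod m n
    calc s' m = s' (n * (m / n) + m % n) := by rw [hm]
      _ ≤ θ ^ (m / n) * s' (m % n) := hB _ _
      _ ≤ θ ^ (m / n) * C := by
          apply mul_le_mul_of_nonneg_left (hCr _ (Nat.mod_lt m hnpos)) (by positivity)
  set γ : ℝ := θ ^ ((1 : ℝ) / (2 * n)) with hγdef
  have hγpos : 0 < γ := Real.rpow_pos_of_pos hθpos _
  have hγ1 : γ < 1 := Real.rpow_lt_one hθpos.le hcon (by positivity)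
  have hev : ∀ᶠ m : ℕ in Filter.atTop, γ ^ m < θ / C := by
    have := tendsto_pow_atTop_nhds_zero_of_lt_one hγpos.le hγ1
    exact this.eventually_lt_const (by positivity)
  have hev2 : ∀ᶠ m : ℕ in Filter.atTop, sn L m ^ ((1 : ℝ) / (m : ℝ)) ≤ γ / t := by
    filter_upwards [hev, Filter.eventually_ge_atTop 1] with m hm hm1
    have hmne : m ≠ 0 := by omega
    have hmr : (0 : ℝ) < m := by exact_mod_cast hm1
    have hnr : (0 : ℝ) < n := by exact_mod_cast hnpos
    -- step 1 : real exponent comparison for the nat division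
    have hkb : (m : ℝ) / n - 1 ≤ (m / n : ℕ) := by
      have h1 : m < n * (m / n) + n := by
        have := Nat.div_add_mod m n
        have := Nat.mod_lt m hnpos
        omega
      have h2 : (m : ℝ) < n * ((m / n : ℕ) : ℝ) + n := by exact_mod_cast h1
      rw [div_sub_one (ne_of_gt hnr), div_le_iff₀ hnr]
      nlinarith
    have hθexp : θ ^ (m / n : ℕ) ≤ θ ^ ((m : ℝ) / n - 1) := by
      rw [← Real.rpow_natCast θ (m / n)]
      exact Real.rpow_le_rpow_of_exponent_ge hθpos hcon.le hkb
    have hγm : γ ^ m = θ ^ ((m : ℝ) / (2 * n)) := by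
      rw [hγdef, ← Real.rpow_natCast (θ ^ ((1 : ℝ) / (2 * n))) m,
        ← Real.rpow_mul hθpos.le]
      congr 1
      field_simp
    have hsplit : θ ^ ((m : ℝ) / n - 1) * C
        = θ ^ ((m : ℝ) / (2 * n)) * (θ ^ ((m : ℝ) / (2 * n)) * (C / θ)) := by
      rw [← mul_assoc, ← Real.rpow_add hθpos]
      rw [show (m : ℝ) / (2 * n) + (m : ℝ) / (2 * n) = (m : ℝ) / n by field_simp; ring]
      rw [show θ ^ ((m : ℝ) / n - 1) = θ ^ ((m : ℝ) / n) * θ ^ (-1 : ℝ) by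
        rw [← Real.rpow_add hθpos]; ring_nf]
      rw [Real.rpow_neg_one]
      ring
    have hkey : s' m ≤ γ ^ m := by
      calc s' m ≤ θ ^ (m / n : ℕ) * C := hs'm m
        _ ≤ θ ^ ((m : ℝ) / n - 1) * C := by
            apply mul_le_mul_of_nonneg_right hθexp hCpos.le
        _ = γ ^ m * (γ ^ m * (C / θ)) := by rw [hsplit, hγm]
        _ ≤ γ ^ m * ((θ / C) * (C / θ)) := by
            apply mul_le_mul_of_nonneg_left _ (by positivity)
            apply mul_le_mul_of_nonneg_right hm.le (by positivity)
        _ = γ ^ m := by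
            rw [div_mul_div_comm, mul_comm θ C, div_self (by positivity), mul_one]
    have hsnm : sn L m ≤ (γ / t) ^ m := by
      have : t ^ m * sn L m ≤ γ ^ m := hkey
      rw [div_pow]
      rw [le_div_iff₀ (by positivity)]
      linarith [this]
    calc sn L m ^ ((1 : ℝ) / (m : ℝ)) ≤ ((γ / t) ^ m) ^ ((1 : ℝ) / (m : ℝ)) :=
          Real.rpow_le_rpow (sn_nonneg hN L m) hsnm (by positivity)
      _ = γ / t := by
          rw [one_div, Real.pow_rpow_inv_natCast (by positivity) hmne]
  have hcb : Filter.IsCoboundedUnder (· ≤ ·) Filter.atTop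
      (fun k : ℕ => sn L k ^ ((1 : ℝ) / (k : ℝ))) := by
    apply Filter.IsBoundedUnder.isCoboundedUnder_flip
    exact ⟨0, Filter.eventually_map.mpr (Filter.Eventually.of_forall fun k =>
      Real.rpow_nonneg (sn_nonneg hN L k) _)⟩
  have hfin : jsr L ≤ γ / t := by
    rw [jsr_eq]
    exact Filter.limsup_le_of_le hcb hev2
  have : γ / t < 1 / t := by
    rw [div_lt_div_iff_of_pos_right ht0]
    exact hγ1
  linarith

end Stmt0Aux

namespace Stmt0Aux

variable {E : Type*} [NormedAddCommGroup E] [NormedSpace ℝ E] {N : ℕ}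

instance instNonemptyWords0 (N : ℕ) : Nonempty (Fin 0 → Fin N) := ⟨fun i => i.elim0⟩

/-- Composition of the IFS maps along a word. -/
def wcomp (f : Fin N → E → E) : ∀ k : ℕ, (Fin k → Fin N) → E → E
  | 0, _ => id
  | (k + 1), σ => f (σ 0) ∘ wcomp f k (Fin.tail σ)

lemma hutch_iterate (f : Fin N → E → E) (k : ℕ) (S : Set E) :
    (hutch f)^[k] S = ⋃ σ : Fin k → Fin N, wcomp f k σ '' S := by
  induction k with
  | zero => simp [wcomp, Set.iUnion_const]
  | succ k ih =>
      rw [Function.iterate_succ_apply', ih]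
      ext p
      simp only [hutch, Set.mem_iUnion, Set.mem_image]
      constructor
      · rintro ⟨i, x, ⟨τ, y, hy, rfl⟩, rfl⟩
        refine ⟨Fin.cons i τ, y, hy, ?_⟩
        simp [wcomp, Fin.tail_cons]
      · rintro ⟨σ, y, hy, rfl⟩
        exact ⟨σ 0, wcomp f k (Fin.tail σ) y, ⟨Fin.tail σ, y, hy, rfl⟩, rfl⟩

lemma wcomp_sub (L : Fin N → E →L[ℝ] E) (a q : Fin N → E) (t : ℝ) :
    ∀ (k : ℕ) (σ : Fin k → Fin N) (x y : E),
      wcomp (fam L a q t) k σ x - wcomp (fam L a q t) k σ y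
        = t ^ k • wordProd L σ (x - y) := by
  intro k
  induction k with
  | zero => intro σ x y; simp [wcomp, wordProd_zero]
  | succ k ih =>
      intro σ x y
      have h1 : wcomp (fam L a q t) (k + 1) σ x
          = fam L a q t (σ 0) (wcomp (fam L a q t) k (Fin.tail σ) x) := rfl
      have h2 : wcomp (fam L a q t) (k + 1) σ y
          = fam L a q t (σ 0) (wcomp (fam L a q t) k (Fin.tail σ) y) := rfl
      rw [h1, h2, wordProd_succ]
      set u := wcomp (fam L a q t) k (Fin.tail σ) x
      set v := wcomp (fam L a q t) k (Fin.tail σ) y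
      have huv : u - v = t ^ k • wordProd L (Fin.tail σ) (x - y) := ih (Fin.tail σ) x y
      simp only [fam]
      have : t • (L (σ 0) u + a (σ 0)) + q (σ 0) - (t • (L (σ 0) v + a (σ 0)) + q (σ 0))
          = t • (L (σ 0) (u - v)) := by
        rw [map_sub]
        module
      rw [this, huv, map_smul]
      rw [ContinuousLinearMap.mul_apply]
      rw [smul_smul, pow_succ]
      ring_nf

lemma dist_wcomp_le (hN : 2 ≤ N) (L : Fin N → E →L[ℝ] E) (a q : Fin N → E) {t : ℝ}
    (ht : 0 ≤ t) (k : ℕ) (σ : Fin k → Fin N) (x y : E) :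
    dist (wcomp (fam L a q t) k σ x) (wcomp (fam L a q t) k σ y)
      ≤ (t ^ k * sn L k) * dist x y := by
  rw [dist_eq_norm, wcomp_sub, norm_smul, Real.norm_eq_abs, abs_of_nonneg (by positivity)]
  rw [dist_eq_norm]
  calc t ^ k * ‖wordProd L σ (x - y)‖ ≤ t ^ k * (‖wordProd L σ‖ * ‖x - y‖) := by
        apply mul_le_mul_of_nonneg_left (ContinuousLinearMap.le_opNorm _ _) (by positivity)
    _ ≤ t ^ k * (sn L k * ‖x - y‖) := by
        apply mul_le_mul_of_nonneg_left _ (by positivity)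
        exact mul_le_mul_of_nonneg_right (norm_wordProd_le_sn hN L σ) (norm_nonneg _)
    _ = (t ^ k * sn L k) * ‖x - y‖ := by ring

end Stmt0Aux

namespace Stmt0Aux

open TopologicalSpace

section HutchMap

variable {ι E : Type*} [MetricSpace E] [Nonempty ι] [Finite ι]

/-- The Hutchinson operator as a map on nonempty compact sets. -/
def hutchMap (f : ι → E → E) (hf : ∀ i, Continuous (f i)) (S : NonemptyCompacts E) :
    NonemptyCompacts E :=
  ⟨⟨hutch f S, isCompact_iUnion fun i => S.isCompact.image (hf i)⟩, by
    obtain ⟨i⟩ := ‹Nonempty ι›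
    obtain ⟨x, hx⟩ := S.nonempty
    exact ⟨f i x, Set.mem_iUnion.mpr ⟨i, Set.mem_image_of_mem _ hx⟩⟩⟩

lemma coe_hutchMap (f : ι → E → E) (hf : ∀ i, Continuous (f i)) (S : NonemptyCompacts E) :
    (hutchMap f hf S : Set E) = hutch f S := rfl

lemma coe_hutchMap_iterate (f : ι → E → E) (hf : ∀ i, Continuous (f i)) (m : ℕ)
    (S : NonemptyCompacts E) :
    (((hutchMap f hf)^[m] S : NonemptyCompacts E) : Set E) = (hutch f)^[m] (S : Set E) := by
  induction m with
  | zero => rfl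
  | succ m ih =>
      rw [Function.iterate_succ_apply', Function.iterate_succ_apply', coe_hutchMap, ih]

lemma dist_hutchMap_le (f : ι → E → E) (hf : ∀ i, Continuous (f i)) {c : ℝ} (hc : 0 ≤ c)
    (hlip : ∀ i (x y : E), dist (f i x) (f i y) ≤ c * dist x y) (S U : NonemptyCompacts E) :
    dist (hutchMap f hf S) (hutchMap f hf U) ≤ c * dist S U := by
  have hfin : EMetric.hausdorffEdist (S : Set E) (U : Set E) ≠ ⊤ :=
    Metric.hausdorffEdist_ne_top_of_nonempty_of_bounded S.nonempty U.nonempty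
      S.isCompact.isBounded U.isCompact.isBounded
  rw [NonemptyCompacts.dist_eq, NonemptyCompacts.dist_eq, coe_hutchMap, coe_hutchMap]
  apply Metric.hausdorffDist_le_of_mem_dist
    (mul_nonneg hc Metric.hausdorffDist_nonneg)
  · rintro p hp
    rw [hutch, Set.mem_iUnion] at hp
    obtain ⟨i, x, hx, rfl⟩ := hp
    obtain ⟨y, hy, hxy⟩ := U.isCompact.exists_infDist_eq_dist U.nonempty x
    refine ⟨f i y, Set.mem_iUnion.mpr ⟨i, Set.mem_image_of_mem _ hy⟩, ?_⟩
    calc dist (f i x) (f i y) ≤ c * dist x y := hlip i x y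
      _ ≤ c * Metric.hausdorffDist (S : Set E) (U : Set E) := by
          apply mul_le_mul_of_nonneg_left _ hc
          rw [← hxy]
          exact Metric.infDist_le_hausdorffDist_of_mem hx hfin
  · rintro p hp
    rw [hutch, Set.mem_iUnion] at hp
    obtain ⟨i, x, hx, rfl⟩ := hp
    obtain ⟨y, hy, hxy⟩ := S.isCompact.exists_infDist_eq_dist S.nonempty x
    refine ⟨f i y, Set.mem_iUnion.mpr ⟨i, Set.mem_image_of_mem _ hy⟩, ?_⟩
    calc dist (f i x) (f i y) ≤ c * dist x y := hlip i x y
      _ ≤ c * Metric.hausdorffDist (S : Set E) (U : Set E) := by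
          apply mul_le_mul_of_nonneg_left _ hc
          rw [← hxy]
          rw [Metric.hausdorffDist_comm] at *
          exact Metric.infDist_le_hausdorffDist_of_mem hx (by
            rw [EMetric.hausdorffEdist_comm]; exact hfin)

end HutchMap

/-- Iterates of a `c`-Lipschitz map converge geometrically to a fixed point. -/
lemma dist_iterate_fixedPt {α : Type*} [MetricSpace α] {T : α → α} {c : ℝ} (hc0 : 0 ≤ c)
    (hlip : ∀ x y, dist (T x) (T y) ≤ c * dist x y) {A : α} (hA : T A = A) :
    ∀ (k : ℕ) (Y : α), dist (T^[k] Y) A ≤ c ^ k * dist Y A := by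
  intro k
  induction k with
  | zero => intro Y; simp
  | succ k ih =>
      intro Y
      rw [Function.iterate_succ_apply']
      calc dist (T (T^[k] Y)) A = dist (T (T^[k] Y)) (T A) := by rw [hA]
        _ ≤ c * dist (T^[k] Y) A := hlip _ _
        _ ≤ c * (c ^ k * dist Y A) := mul_le_mul_of_nonneg_left (ih Y) hc0
        _ = c ^ (k + 1) * dist Y A := by ring

/-- Part 1: existence of the attractor below the threshold. -/
lemma part1 {E : Type*} [NormedAddCommGroup E] [NormedSpace ℝ E] [CompleteSpace E] {N : ℕ}
    (hN : 2 ≤ N) (L : Fin N → E →L[ℝ] E) (a q : Fin N → E) (hρ : 0 < jsr L)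
    {t : ℝ} (ht0 : 0 ≤ t) (ht : t < 1 / jsr L) :
    ∃ A : Set E, IsAttractor (fam L a q t) A := by
  haveI : Nonempty (Fin N) := ⟨⟨0, by omega⟩⟩
  haveI : Nonempty (NonemptyCompacts E) :=
    ⟨⟨⟨{0}, isCompact_singleton⟩, Set.singleton_nonempty 0⟩⟩
  obtain ⟨n, hn0, hc⟩ := exists_good_n hN hρ ht0 ht
  have hnpos : 0 < n := Nat.pos_of_ne_zero hn0
  set f := fam L a q t with hfdef
  have hfcont : ∀ i, Continuous (f i) := fun i =>
    ((((L i).continuous.add continuous_const).const_smul t).add continuous_const)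
  set c := t ^ n * sn L n with hcdef
  have hc0 : 0 ≤ c := mul_nonneg (pow_nonneg ht0 n) (sn_nonneg hN L n)
  set g : (Fin n → Fin N) → E → E := wcomp f n with hgdef
  have hglip : ∀ σ (x y : E), dist (g σ x) (g σ y) ≤ c * dist x y := fun σ x y =>
    dist_wcomp_le hN L a q ht0 n σ x y
  have hgcont : ∀ σ, Continuous (g σ) := fun σ =>
    (LipschitzWith.of_dist_le_mul (K := c.toNNReal) (fun x y => by
      rw [Real.coe_toNNReal c hc0]; exact hglip σ x y)).continuous
  set T := hutchMap f hfcont with hTdef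
  set T' := hutchMap g hgcont with hT'def
  have hTT' : ∀ S, T^[n] S = T' S := by
    intro S
    apply NonemptyCompacts.ext
    rw [coe_hutchMap_iterate, coe_hutchMap, hutch_iterate]
    rfl
  have hlipT' : ∀ S U, dist (T' S) (T' U) ≤ c * dist S U :=
    dist_hutchMap_le g hgcont hc0 hglip
  have hK : ContractingWith c.toNNReal T' := by
    constructor
    · have h1 : c.toNNReal < (1 : ℝ).toNNReal :=
        (Real.toNNReal_lt_toNNReal_iff one_pos).mpr hc
      simpa using h1
    · exact LipschitzWith.of_dist_le_mul (fun S U => by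
        rw [Real.coe_toNNReal c hc0]; exact hlipT' S U)
  set Afix := ContractingWith.fixedPoint T' hK with hAdef
  have hfix : T' Afix = Afix := hK.fixedPoint_isFixedPt
  refine ⟨(Afix : Set E), Afix.nonempty, Afix.isCompact, ?_⟩
  intro K hKne hKcomp
  set X : NonemptyCompacts E := ⟨⟨K, hKcomp⟩, hKne⟩ with hXdef
  have heq : ∀ m, hausdorffDist ((hutch f)^[m] K) (Afix : Set E) = dist (T^[m] X) Afix := by
    intro m
    have h1 : (hutch f)^[m] K = ((T^[m] X : NonemptyCompacts E) : Set E) :=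
      (coe_hutchMap_iterate f hfcont m X).symm
    rw [h1, NonemptyCompacts.dist_eq]
  have hrangene : (Finset.range n).Nonempty := Finset.nonempty_range_iff.mpr hn0
  set Cmax := (Finset.range n).sup' hrangene (fun r => dist (T^[r] X) Afix) with hCmdef
  have hCm : ∀ r, r < n → dist (T^[r] X) Afix ≤ Cmax := by
    intro r hr
    rw [hCmdef]
    exact Finset.le_sup' (fun r => dist (T^[r] X) Afix) (Finset.mem_range.mpr hr)
  have hbound : ∀ m, dist (T^[m] X) Afix ≤ c ^ (m / n) * Cmax := by
    intro m
    have hm : n * (m / n) + m % n = m := Nat.div_add_mod m n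
    have hdecomp : T^[m] X = (T')^[m / n] (T^[m % n] X) := by
      conv_lhs => rw [← hm]
      rw [Function.iterate_add_apply, Function.iterate_mul, funext hTT']
    rw [hdecomp]
    calc dist ((T')^[m / n] (T^[m % n] X)) Afix
        ≤ c ^ (m / n) * dist (T^[m % n] X) Afix :=
          dist_iterate_fixedPt hc0 hlipT' hfix (m / n) (T^[m % n] X)
      _ ≤ c ^ (m / n) * Cmax :=
          mul_le_mul_of_nonneg_left (hCm _ (Nat.mod_lt m hnpos)) (by positivity)
  have htend : Filter.Tendsto (fun m : ℕ => c ^ (m / n) * Cmax) Filter.atTop (nhds 0) := by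
    have h1 : Filter.Tendsto (fun k : ℕ => c ^ k * Cmax) Filter.atTop (nhds 0) := by
      have := (tendsto_pow_atTop_nhds_zero_of_lt_one hc0 hc).mul_const Cmax
      rwa [zero_mul] at this
    have h2 : Filter.Tendsto (fun m : ℕ => m / n) Filter.atTop Filter.atTop := by
      apply Filter.tendsto_atTop_atTop.mpr
      intro b
      refine ⟨n * b, fun m hm => ?_⟩
      rw [Nat.le_div_iff_mul_le hnpos, Nat.mul_comm]
      exact hm
    exact h1.comp h2
  have : Filter.Tendsto (fun m : ℕ => dist (T^[m] X) Afix) Filter.atTop (nhds 0) :=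
    squeeze_zero (fun m => dist_nonneg) hbound htend
  simpa only [heq] using this

lemma wcomp_continuous {E : Type*} [NormedAddCommGroup E] [NormedSpace ℝ E] {N : ℕ}
    {f : Fin N → E → E} (hf : ∀ i, Continuous (f i)) :
    ∀ (k : ℕ) (σ : Fin k → Fin N), Continuous (wcomp f k σ) := by
  intro k
  induction k with
  | zero => intro σ; exact continuous_id
  | succ k ih => intro σ; exact (hf (σ 0)).comp (ih (Fin.tail σ))

/-- Part 2: no attractor at or above the threshold. -/
lemma part2 {E : Type*} [NormedAddCommGroup E] [NormedSpace ℝ E] [ProperSpace E] {N : ℕ}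
    (hN : 2 ≤ N) (L : Fin N → E →L[ℝ] E) (hL : ∀ i, Function.Bijective (L i))
    (a q : Fin N → E) (hρ : 0 < jsr L) {t : ℝ} (ht : 1 / jsr L ≤ t) :
    ¬ ∃ A : Set E, IsAttractor (fam L a q t) A := by
  haveI : Nonempty (Fin N) := ⟨⟨0, by omega⟩⟩
  rintro ⟨A, hAne, hAcomp, hconv⟩
  have ht0 : 0 < t := lt_of_lt_of_le (by positivity) ht
  set f := fam L a q t with hfdef
  have hfcont : ∀ i, Continuous (f i) := fun i =>
    ((((L i).continuous.add continuous_const).const_smul t).add continuous_const)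
  set D := Metric.diam A with hDdef
  have hD0 : 0 ≤ D := Metric.diam_nonneg
  set R := D + 2 with hRdef
  have hR : 0 < R := by positivity
  set K := Metric.closedBall (0 : E) R with hKdef
  have hKcomp : IsCompact K := isCompact_closedBall _ _
  have hKne : K.Nonempty := ⟨0, Metric.mem_closedBall_self hR.le⟩
  have htd := hconv K hKne hKcomp
  have hev : ∀ᶠ m : ℕ in Filter.atTop, hausdorffDist ((hutch f)^[m] K) A < 1 :=
    htd.eventually_lt_const one_pos
  obtain ⟨n, hlt, hn1⟩ := (hev.and (Filter.eventually_ge_atTop 1)).exists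
  have hnne : n ≠ 0 := by omega
  have hsnpos : 0 < sn L n := sn_pos hN hL hρ n
  have h1 : 1 ≤ t ^ n * sn L n := one_le_pow_mul_sn hN hL hρ ht hnne
  obtain ⟨σ₀, hσ₀⟩ := Finite.exists_max (fun σ : Fin n → Fin N => ‖wordProd L σ‖)
  have hsn_le : sn L n ≤ ‖wordProd L σ₀‖ := sn_le hN L hσ₀
  have hhalf : sn L n / 2 < ‖wordProd L σ₀‖ :=
    lt_of_lt_of_le (half_lt_self hsnpos) hsn_le
  obtain ⟨u, hu1, huP⟩ := (wordProd L σ₀).exists_lt_apply_of_lt_opNorm hhalf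
  set x := R • u with hxdef
  set y := (-R) • u with hydef
  have hx : x ∈ K := by
    rw [hKdef, Metric.mem_closedBall, dist_zero_right, hxdef, norm_smul,
      Real.norm_eq_abs, abs_of_nonneg hR.le]
    nlinarith [norm_nonneg u]
  have hy : y ∈ K := by
    rw [hKdef, Metric.mem_closedBall, dist_zero_right, hydef, norm_smul,
      Real.norm_eq_abs, abs_of_nonpos (by linarith), neg_neg]
    nlinarith [norm_nonneg u]
  set p := wcomp f n σ₀ x with hpdef
  set p' := wcomp f n σ₀ y with hp'def
  set S := (hutch f)^[n] K with hSdef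
  have hp : p ∈ S := by
    rw [hSdef, hutch_iterate]
    exact Set.mem_iUnion.mpr ⟨σ₀, Set.mem_image_of_mem _ hx⟩
  have hp' : p' ∈ S := by
    rw [hSdef, hutch_iterate]
    exact Set.mem_iUnion.mpr ⟨σ₀, Set.mem_image_of_mem _ hy⟩
  have hScomp : IsCompact S := by
    rw [hSdef, hutch_iterate]
    exact isCompact_iUnion fun σ => hKcomp.image (wcomp_continuous hfcont n σ)
  have hdist : dist p p' = t ^ n * (2 * R) * ‖wordProd L σ₀ u‖ := by
    have hxy : x - y = (2 * R) • u := by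
      rw [hxdef, hydef]
      module
    rw [dist_eq_norm, hpdef, hp'def, wcomp_sub, hxy, map_smul, smul_smul, norm_smul,
      Real.norm_eq_abs, abs_of_nonneg (by positivity)]
  have hbig : R < dist p p' := by
    rw [hdist]
    have htn : 0 < t ^ n := pow_pos ht0 n
    have h2 : t ^ n * (2 * R) * (sn L n / 2) < t ^ n * (2 * R) * ‖wordProd L σ₀ u‖ :=
      mul_lt_mul_of_pos_left huP (by positivity)
    calc R = R * 1 := (mul_one R).symm
      _ ≤ R * (t ^ n * sn L n) := mul_le_mul_of_nonneg_left h1 hR.le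
      _ = t ^ n * (2 * R) * (sn L n / 2) := by ring
      _ < t ^ n * (2 * R) * ‖wordProd L σ₀ u‖ := h2
  have hfin : EMetric.hausdorffEdist S A ≠ ⊤ :=
    Metric.hausdorffEdist_ne_top_of_nonempty_of_bounded ⟨p, hp⟩ hAne
      hScomp.isBounded hAcomp.isBounded
  obtain ⟨ap, hap, hdp⟩ := Metric.exists_dist_lt_of_hausdorffDist_lt hp hlt hfin
  obtain ⟨ap', hap', hdp'⟩ := Metric.exists_dist_lt_of_hausdorffDist_lt hp' hlt hfin
  have haa : dist ap ap' ≤ D :=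
    Metric.dist_le_diam_of_mem hAcomp.isBounded hap hap'
  have : dist p p' ≤ dist p ap + dist ap ap' + dist ap' p' := dist_triangle4 p ap ap' p'
  rw [dist_comm ap' p'] at this
  have : dist p p' < R := by
    rw [hRdef]
    linarith
  linarith

end Stmt0Aux

end Aux

/-- For a one-parameter affine family on `ℝ^d` with joint spectral radius
`ρ(F) > 0` and `t₀ = 1/ρ(F)`: the IFS `F_t` has an attractor for every `0 ≤ t < t₀`, and has
no attractor for every `t ≥ t₀`. -/
theorem stmt0 {d N : ℕ} (hN : 2 ≤ N)
    (L : Fin N → EuclideanSpace ℝ (Fin d) →L[ℝ] EuclideanSpace ℝ (Fin d))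
    (hL : ∀ i, Function.Bijective (L i))
    (a q : Fin N → EuclideanSpace ℝ (Fin d))
    (hρ : 0 < jsr L) :
    (∀ t : ℝ, 0 ≤ t → t < 1 / jsr L →
      ∃ A : Set (EuclideanSpace ℝ (Fin d)), IsAttractor (fam L a q t) A) ∧
    (∀ t : ℝ, 1 / jsr L ≤ t →
      ¬ ∃ A : Set (EuclideanSpace ℝ (Fin d)), IsAttractor (fam L a q t) A) := by
  constructor
  · intro t ht0 ht
    exact Stmt0Aux.part1 hN L a q hρ ht0 ht
  · intro t ht
    exact Stmt0Aux.part2 hN L hL a q hρ ht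
end

section
/- Let F_t be a one-parameter affine family on ℝ^d with t_0 = 1/ρ(F). Then the map t ↦ A_t, from the interval (0, t_0) to the space of nonempty compact subsets of ℝ^d equipped with the Hausdorff metric, is continuous. -/
open Metric Filter Set
open scoped RealInnerProductSpace

noncomputable section

namespace Stmt1Aux

/-- Word maps: composition of the maps along a word. -/
def wmap {E : Type*} {N : ℕ} (f : Fin N → E → E) : ∀ {k : ℕ}, (Fin k → Fin N) → E → E
  | 0, _ => id
  | _ + 1, σ => f (σ 0) ∘ wmap f (Fin.tail σ)

lemma hutch_mono {ι E : Type*} (f : ι → E → E) {K K' : Set E} (h : K ⊆ K') :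
    hutch f K ⊆ hutch f K' :=
  Set.iUnion_mono fun _ => Set.image_mono h

lemma hutch_nonempty {ι E : Type*} [Nonempty ι] (f : ι → E → E) {K : Set E}
    (h : K.Nonempty) : (hutch f K).Nonempty := by
  obtain ⟨x, hx⟩ := h
  exact ⟨f (Classical.arbitrary ι) x,
    Set.mem_iUnion.2 ⟨Classical.arbitrary ι, Set.mem_image_of_mem _ hx⟩⟩

lemma hutch_isCompact {ι E : Type*} [TopologicalSpace E] [Finite ι] {f : ι → E → E}
    (hf : ∀ i, Continuous (f i)) {K : Set E} (h : IsCompact K) :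
    IsCompact (hutch f K) :=
  isCompact_iUnion fun i => h.image (hf i)

lemma hutch_iter_nonempty {ι E : Type*} [Nonempty ι] (f : ι → E → E) {K : Set E}
    (h : K.Nonempty) (n : ℕ) : ((hutch f)^[n] K).Nonempty := by
  induction n with
  | zero => simpa
  | succ n ih => rw [Function.iterate_succ_apply']; exact hutch_nonempty f ih

lemma hutch_iter_isCompact {ι E : Type*} [TopologicalSpace E] [Finite ι] {f : ι → E → E}
    (hf : ∀ i, Continuous (f i)) {K : Set E} (h : IsCompact K) (n : ℕ) :
    IsCompact ((hutch f)^[n] K) := by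
  induction n with
  | zero => simpa
  | succ n ih => rw [Function.iterate_succ_apply']; exact hutch_isCompact hf ih

lemma hutch_iterate {E : Type*} {N : ℕ} (f : Fin N → E → E) (k : ℕ) (K : Set E) :
    (hutch f)^[k] K = hutch (fun σ : Fin k → Fin N => wmap f σ) K := by
  induction k with
  | zero =>
    ext x
    simp only [Function.iterate_zero, id_eq, hutch, Set.mem_iUnion, Set.mem_image]
    exact ⟨fun hx => ⟨Fin.elim0, x, hx, rfl⟩, fun ⟨σ, z, hz, hzx⟩ => by
      simpa [wmap] using hzx ▸ hz⟩
  | succ k ih =>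
    rw [Function.iterate_succ_apply', ih]
    ext x
    simp only [hutch, Set.mem_iUnion, Set.mem_image]
    constructor
    · rintro ⟨i, y, ⟨σ, z, hz, rfl⟩, rfl⟩
      refine ⟨Fin.cons i σ, z, hz, ?_⟩
      simp only [wmap, Fin.cons_zero, Fin.tail_cons, Function.comp_apply]
    · rintro ⟨τ, z, hz, rfl⟩
      exact ⟨τ 0, wmap f (Fin.tail τ) z, ⟨Fin.tail τ, z, hz, rfl⟩, rfl⟩

lemma hutch_hausdorffDist_le {α : Type*} [MetricSpace α] {ι : Type*}
    {g g' : ι → α → α} {K K' : Set α} (hK : K.Nonempty) (hKc : IsCompact K)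
    (hK' : K'.Nonempty) (hK'c : IsCompact K') {c D : ℝ} (hc : 0 ≤ c) (hD : 0 ≤ D)
    (hg : ∀ j x y, dist (g j x) (g j y) ≤ c * dist x y)
    (hgg' : ∀ j, ∀ x ∈ K', dist (g j x) (g' j x) ≤ D) :
    hausdorffDist (hutch g K) (hutch g' K') ≤ c * hausdorffDist K K' + D := by
  have hfin : EMetric.hausdorffEdist K K' ≠ ⊤ :=
    hausdorffEdist_ne_top_of_nonempty_of_bounded hK hK' hKc.isBounded hK'c.isBounded
  have hd0 : 0 ≤ hausdorffDist K K' := hausdorffDist_nonneg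
  apply hausdorffDist_le_of_mem_dist (by positivity)
  · rintro x hx
    obtain ⟨j, hj⟩ := Set.mem_iUnion.1 hx
    obtain ⟨y, hy, rfl⟩ := hj
    obtain ⟨y', hy', hdy⟩ := hK'c.exists_infDist_eq_dist hK' y
    refine ⟨g' j y', Set.mem_iUnion.2 ⟨j, Set.mem_image_of_mem _ hy'⟩, ?_⟩
    have h1 : dist y y' ≤ hausdorffDist K K' := by
      rw [← hdy]; exact infDist_le_hausdorffDist_of_mem hy hfin
    calc dist (g j y) (g' j y')
        ≤ dist (g j y) (g j y') + dist (g j y') (g' j y') := dist_triangle _ _ _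
      _ ≤ c * dist y y' + D := add_le_add (hg j y y') (hgg' j y' hy')
      _ ≤ c * hausdorffDist K K' + D := by nlinarith
  · rintro x hx
    obtain ⟨j, hj⟩ := Set.mem_iUnion.1 hx
    obtain ⟨y', hy', rfl⟩ := hj
    obtain ⟨y, hy, hdy⟩ := hKc.exists_infDist_eq_dist hK y'
    refine ⟨g j y, Set.mem_iUnion.2 ⟨j, Set.mem_image_of_mem _ hy⟩, ?_⟩
    have h1 : dist y' y ≤ hausdorffDist K K' := by
      rw [← hdy, ← hausdorffDist_comm]
      exact infDist_le_hausdorffDist_of_mem hy' (by rwa [EMetric.hausdorffEdist_comm])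
    calc dist (g' j y') (g j y)
        ≤ dist (g' j y') (g j y') + dist (g j y') (g j y) := dist_triangle _ _ _
      _ ≤ D + c * dist y' y := add_le_add (by rw [dist_comm]; exact hgg' j y' hy') (hg j y' y)
      _ ≤ c * hausdorffDist K K' + D := by nlinarith

lemma attractor_hutch_eq {ι α : Type*} [MetricSpace α] [Nonempty ι] [Finite ι]
    {f : ι → α → α} {A : Set α} (hf : ∀ i, Continuous (f i)) {c : ℝ} (hc : 0 ≤ c)
    (hlip : ∀ i x y, dist (f i x) (f i y) ≤ c * dist x y)
    (hA : IsAttractor f A) : hutch f A = A := by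
  obtain ⟨hne, hcomp, htend⟩ := hA
  have hitne : ∀ n, ((hutch f)^[n] A).Nonempty := hutch_iter_nonempty f hne
  have hitc : ∀ n, IsCompact ((hutch f)^[n] A) := hutch_iter_isCompact hf hcomp
  have h1 := htend A hne hcomp
  have h2 : Tendsto (fun n => hausdorffDist ((hutch f)^[n + 1] A) A) atTop (nhds 0) :=
    h1.comp (tendsto_add_atTop_nat 1)
  have hhne : (hutch f A).Nonempty := hutch_nonempty f hne
  have hhc : IsCompact (hutch f A) := hutch_isCompact hf hcomp
  have key : ∀ n, hausdorffDist A (hutch f A)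
      ≤ hausdorffDist ((hutch f)^[n + 1] A) A + c * hausdorffDist ((hutch f)^[n] A) A := by
    intro n
    have h3 : hausdorffDist ((hutch f)^[n + 1] A) (hutch f A)
        ≤ c * hausdorffDist ((hutch f)^[n] A) A + 0 := by
      rw [Function.iterate_succ_apply']
      exact hutch_hausdorffDist_le (hitne n) (hitc n) hne hcomp hc le_rfl hlip
        (fun j x _ => by simp)
    have hfin : EMetric.hausdorffEdist A ((hutch f)^[n + 1] A) ≠ ⊤ :=
      hausdorffEdist_ne_top_of_nonempty_of_bounded hne (hitne _) hcomp.isBounded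
        (hitc _).isBounded
    calc hausdorffDist A (hutch f A)
        ≤ hausdorffDist A ((hutch f)^[n + 1] A)
          + hausdorffDist ((hutch f)^[n + 1] A) (hutch f A) := hausdorffDist_triangle hfin
      _ ≤ hausdorffDist ((hutch f)^[n + 1] A) A + c * hausdorffDist ((hutch f)^[n] A) A := by
          rw [hausdorffDist_comm]; linarith
  have hlim : Tendsto (fun n => hausdorffDist ((hutch f)^[n + 1] A) A
      + c * hausdorffDist ((hutch f)^[n] A) A) atTop (nhds 0) := by
    have := h2.add (h1.const_mul c)
    simpa using this
  have hle : hausdorffDist A (hutch f A) ≤ 0 := ge_of_tendsto' hlim key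
  have hzero : hausdorffDist A (hutch f A) = 0 := le_antisymm hle hausdorffDist_nonneg
  have hfin : EMetric.hausdorffEdist A (hutch f A) ≠ ⊤ :=
    hausdorffEdist_ne_top_of_nonempty_of_bounded hne hhne hcomp.isBounded hhc.isBounded
  exact ((hcomp.isClosed.hausdorffDist_zero_iff_eq hhc.isClosed hfin).1 hzero).symm

lemma attractor_subset_of_invariant {ι α : Type*} [MetricSpace α] [Nonempty ι] [Finite ι]
    {f : ι → α → α} {A K : Set α} (hf : ∀ i, Continuous (f i)) (hA : IsAttractor f A)
    (hKne : K.Nonempty) (hKc : IsCompact K) {k : ℕ} (hk : 1 ≤ k)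
    (hinv : (hutch f)^[k] K ⊆ K) : A ⊆ K := by
  obtain ⟨hne, hcomp, htend⟩ := hA
  have hmono : Monotone (hutch f) := fun _ _ h => hutch_mono f h
  have hsub : ∀ n, (hutch f)^[k * n] K ⊆ K := by
    intro n
    induction n with
    | zero => simp
    | succ n ih =>
      have : k * (n + 1) = k + k * n := by ring
      rw [this, Function.iterate_add_apply]
      exact (hmono.iterate k ih).trans hinv
  have htend' : Tendsto (fun n => hausdorffDist ((hutch f)^[k * n] K) A) atTop (nhds 0) :=
    (htend K hKne hKc).comp (tendsto_atTop_mono (fun n => Nat.le_mul_of_pos_left n hk)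
      tendsto_id)
  intro x hx
  have hbound : ∀ n, infDist x K ≤ hausdorffDist ((hutch f)^[k * n] K) A := by
    intro n
    have hfin : EMetric.hausdorffEdist A ((hutch f)^[k * n] K) ≠ ⊤ :=
      hausdorffEdist_ne_top_of_nonempty_of_bounded hne (hutch_iter_nonempty f hKne _)
        hcomp.isBounded (hutch_iter_isCompact hf hKc _).isBounded
    calc infDist x K ≤ infDist x ((hutch f)^[k * n] K) :=
          infDist_le_infDist_of_subset (hsub n) (hutch_iter_nonempty f hKne _)
      _ ≤ hausdorffDist A ((hutch f)^[k * n] K) := infDist_le_hausdorffDist_of_mem hx hfin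
      _ = hausdorffDist ((hutch f)^[k * n] K) A := hausdorffDist_comm ..
  have hinf0 : infDist x K ≤ 0 := ge_of_tendsto' htend' hbound
  exact (hKc.isClosed.mem_iff_infDist_zero hKne).2 (le_antisymm hinf0 infDist_nonneg)

end Stmt1Aux

namespace Stmt1Aux

variable {E : Type*} [NormedAddCommGroup E] [NormedSpace ℝ E] {N : ℕ}
  (L : Fin N → E →L[ℝ] E) (a q : Fin N → E)

lemma fam_sub (u : ℝ) (i : Fin N) (x y : E) :
    fam L a q u i x - fam L a q u i y = u • L i (x - y) := by
  simp only [fam, map_sub, smul_add, smul_sub]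
  abel

lemma wmap_fam_sub (u : ℝ) : ∀ {k : ℕ} (σ : Fin k → Fin N) (x y : E),
    wmap (fam L a q u) σ x - wmap (fam L a q u) σ y
      = u ^ k • ((List.ofFn fun j => L (σ j)).prod) (x - y)
  | 0, σ, x, y => by
    simp [wmap, List.ofFn_zero, ContinuousLinearMap.one_apply]
  | k + 1, σ, x, y => by
    have ih := wmap_fam_sub u (Fin.tail σ) x y
    show fam L a q u (σ 0) (wmap (fam L a q u) (Fin.tail σ) x)
        - fam L a q u (σ 0) (wmap (fam L a q u) (Fin.tail σ) y) = _
    rw [fam_sub, ih, map_smul, List.ofFn_succ, List.prod_cons]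
    rw [show (fun i : Fin k => L (σ i.succ)) = fun i : Fin k => L (Fin.tail σ i) from rfl]
    rw [smul_smul, pow_succ, mul_comm, ContinuousLinearMap.mul_apply]

lemma continuous_wmap_fam : ∀ {k : ℕ} (σ : Fin k → Fin N),
    Continuous fun p : ℝ × E => wmap (fam L a q p.1) σ p.2
  | 0, σ => continuous_snd
  | k + 1, σ => by
    have ih := continuous_wmap_fam (Fin.tail σ)
    show Continuous fun p : ℝ × E =>
      fam L a q p.1 (σ 0) (wmap (fam L a q p.1) (Fin.tail σ) p.2)
    unfold fam
    exact (continuous_fst.smul (((L (σ 0)).continuous.comp ih).add continuous_const)).add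
      continuous_const

end Stmt1Aux

end

set_option maxHeartbeats 1000000 in
/-- For a one-parameter affine family on `ℝ^d`, the map `t ↦ A_t` from
`(0, t₀)` to the space of nonempty compact subsets of `ℝ^d` with the Hausdorff metric is
continuous. -/
theorem stmt1 {d N : ℕ} (hN : 2 ≤ N)
    (L : Fin N → EuclideanSpace ℝ (Fin d) →L[ℝ] EuclideanSpace ℝ (Fin d))
    (hL : ∀ i, Function.Bijective (L i))
    (a q : Fin N → EuclideanSpace ℝ (Fin d))
    (hρ : 0 < jsr L)
    (A : ℝ → TopologicalSpace.NonemptyCompacts (EuclideanSpace ℝ (Fin d)))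
    (hA : ∀ t : ℝ, 0 < t → t < 1 / jsr L → IsAttractor (fam L a q t) (A t : Set (EuclideanSpace ℝ (Fin d)))) :
    ContinuousOn A (Set.Ioo 0 (1 / jsr L)) := by

  classical
  haveI : Nonempty (Fin N) := ⟨⟨0, by omega⟩⟩
  set t₀ := 1 / jsr L with ht₀def
  intro t htmem
  obtain ⟨ht0, htlt⟩ := htmem
  -- choose `s` with `t < s < t₀`
  set s : ℝ := (t + t₀) / 2 with hsdef
  have hts : t < s := by rw [hsdef]; linarith
  have hst₀ : s < t₀ := by rw [hsdef]; linarith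
  have hs0 : 0 < s := lt_trans ht0 hts
  have hjs : jsr L < 1 / s := by
    rw [lt_div_iff₀ hs0]
    have h1 : s * jsr L < 1 := by
      have h2 := (lt_div_iff₀ hρ).1 (ht₀def ▸ hst₀)
      linarith
    linarith [mul_comm s (jsr L)]
  -- uniform bound on the norms of the linear maps
  obtain ⟨C₀, hC₀⟩ : ∃ C, ∀ i : Fin N, ‖L i‖ ≤ C := Finite.exists_le _
  set C := max C₀ 1 with hCdef
  have hC1 : (1 : ℝ) ≤ C := le_max_right _ _
  have hC0 : (0 : ℝ) ≤ C := by linarith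
  have hC : ∀ i, ‖L i‖ ≤ C := fun i => (hC₀ i).trans (le_max_left _ _)
  have hword : ∀ (k : ℕ) (σ : Fin k → Fin N),
      ‖(List.ofFn fun j : Fin k => L (σ j)).prod‖ ≤ C ^ k := by
    intro k
    induction k with
    | zero =>
      intro σ
      rw [List.ofFn_zero, List.prod_nil, pow_zero, ContinuousLinearMap.one_def]
      exact ContinuousLinearMap.norm_id_le
    | succ k ih =>
      intro σ
      rw [List.ofFn_succ, List.prod_cons]
      calc ‖L (σ 0) * (List.ofFn fun i : Fin k => L (σ i.succ)).prod‖
          ≤ ‖L (σ 0)‖ * ‖(List.ofFn fun i : Fin k => L (σ i.succ)).prod‖ := norm_mul_le _ _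
        _ ≤ C * C ^ k := mul_le_mul (hC _) (ih (Fin.tail σ)) (norm_nonneg _) hC0
        _ = C ^ (k + 1) := (pow_succ' C k).symm
  set S : ℕ → ℝ := fun k =>
    ⨆ σ : Fin k → Fin N, ‖(List.ofFn fun j : Fin k => L (σ j)).prod‖ with hSdef
  have hSnn : ∀ k, 0 ≤ S k := fun k => Real.iSup_nonneg fun σ => norm_nonneg _
  have hSle : ∀ k, S k ≤ C ^ k := fun k => ciSup_le fun σ => hword k σ
  have hbdd : Filter.IsBoundedUnder (· ≤ ·) atTop (fun k : ℕ => S k ^ ((1 : ℝ) / (k : ℝ))) := by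
    refine isBoundedUnder_of ⟨C, fun k => ?_⟩
    rcases Nat.eq_zero_or_pos k with hk | hk
    · subst hk
      rw [Nat.cast_zero, div_zero, Real.rpow_zero]
      exact hC1
    · have h1 : S k ^ ((1 : ℝ) / k) ≤ (C ^ k) ^ ((1 : ℝ) / k) :=
        Real.rpow_le_rpow (hSnn k) (hSle k) (by positivity)
      have h2 : ((C : ℝ) ^ k) ^ ((1 : ℝ) / k) = C := by
        rw [← Real.rpow_natCast C k, ← Real.rpow_mul hC0, mul_one_div,
          div_self (by exact_mod_cast hk.ne' : (k : ℝ) ≠ 0), Real.rpow_one]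
      linarith
  have hev : ∀ᶠ k in atTop, S k ^ ((1 : ℝ) / (k : ℝ)) < 1 / s := by
    have hlim : Filter.limsup (fun k : ℕ => S k ^ ((1 : ℝ) / (k : ℝ))) atTop < 1 / s := hjs
    exact eventually_lt_of_limsup_lt hlim hbdd
  obtain ⟨k, hkev, hk1⟩ := (hev.and (eventually_ge_atTop 1)).exists
  set B := S k with hBdef
  have hB0 : 0 ≤ B := hSnn k
  have hkR0 : (k : ℝ) ≠ 0 := by exact_mod_cast (by omega : k ≠ 0)
  have hBlt : B < (1 / s) ^ k := by
    have h1 : B = (B ^ ((1 : ℝ) / k)) ^ k := by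
      rw [← Real.rpow_natCast (B ^ ((1 : ℝ) / k)) k, ← Real.rpow_mul hB0, one_div,
        inv_mul_cancel₀ hkR0, Real.rpow_one]
    rw [h1]
    exact pow_lt_pow_left₀ hkev (Real.rpow_nonneg hB0 _) (by omega)
  set lam := s ^ k * B with hlamdef
  have hlam0 : 0 ≤ lam := mul_nonneg (pow_nonneg hs0.le _) hB0
  have hlam1 : lam < 1 := by
    calc lam < s ^ k * (1 / s) ^ k := mul_lt_mul_of_pos_left hBlt (pow_pos hs0 k)
      _ = 1 := by rw [← mul_pow, mul_one_div, div_self hs0.ne', one_pow]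
  have hPB : ∀ σ : Fin k → Fin N, ‖(List.ofFn fun j : Fin k => L (σ j)).prod‖ ≤ B := by
    intro σ
    rw [hBdef, hSdef]
    exact le_ciSup
      (Finite.bddAbove_range fun σ : Fin k → Fin N => ‖(List.ofFn fun j : Fin k => L (σ j)).prod‖) σ
  set t₁ := t / 2 with ht₁def
  have ht₁pos : 0 < t₁ := half_pos ht0
  have ht₁t : t₁ < t := half_lt_self ht0
  have hI : Icc t₁ s ⊆ Ioo 0 t₀ := fun u hu =>
    ⟨lt_of_lt_of_le ht₁pos hu.1, lt_of_le_of_lt hu.2 hst₀⟩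
  have htI : t ∈ Icc t₁ s := ⟨ht₁t.le, hts.le⟩
  -- uniform contraction on words of length k
  have hlip : ∀ u ∈ Icc t₁ s, ∀ (σ : Fin k → Fin N) (x y : EuclideanSpace ℝ (Fin d)),
      dist (Stmt1Aux.wmap (fam L a q u) σ x) (Stmt1Aux.wmap (fam L a q u) σ y)
        ≤ lam * dist x y := by
    intro u hu σ x y
    have hu0 : 0 ≤ u := le_trans ht₁pos.le hu.1
    rw [dist_eq_norm, dist_eq_norm, Stmt1Aux.wmap_fam_sub, norm_smul, Real.norm_eq_abs,
      abs_of_nonneg (pow_nonneg hu0 k)]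
    have h1 : ‖(List.ofFn fun j : Fin k => L (σ j)).prod (x - y)‖ ≤ B * ‖x - y‖ :=
      le_trans (ContinuousLinearMap.le_opNorm _ _)
        (mul_le_mul_of_nonneg_right (hPB σ) (norm_nonneg _))
    have h2 : u ^ k ≤ s ^ k := pow_le_pow_left₀ hu0 hu.2 k
    have h3 : (0 : ℝ) ≤ u ^ k := pow_nonneg hu0 k
    nlinarith [norm_nonneg (x - y), norm_nonneg ((List.ofFn fun j : Fin k => L (σ j)).prod (x - y))]
  -- uniform bound on the displacement of the origin
  set ψ : ℝ × EuclideanSpace ℝ (Fin d) → ((Fin k → Fin N) → EuclideanSpace ℝ (Fin d)) :=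
    fun p σ => Stmt1Aux.wmap (fam L a q p.1) σ p.2 with hψdef
  have hψc : Continuous ψ := continuous_pi fun σ => Stmt1Aux.continuous_wmap_fam L a q σ
  obtain ⟨m₀, hm₀⟩ :=
    ((isCompact_Icc (a := t₁) (b := s)).prod
      (isCompact_singleton (x := (0 : EuclideanSpace ℝ (Fin d))))).exists_bound_of_continuousOn
      hψc.continuousOn
  set m := max m₀ 0 with hmdef
  have hm0 : 0 ≤ m := le_max_right _ _
  have hwm0 : ∀ u ∈ Icc t₁ s, ∀ σ : Fin k → Fin N,
      ‖Stmt1Aux.wmap (fam L a q u) σ 0‖ ≤ m := by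
    intro u hu σ
    have h1 : ‖ψ (u, 0)‖ ≤ m₀ := hm₀ (u, 0) (Set.mk_mem_prod hu rfl)
    exact le_trans (norm_le_pi_norm (ψ (u, 0)) σ) (le_trans h1 (le_max_left _ _))
  set R := m / (1 - lam) with hRdef
  have hR0 : 0 ≤ R := div_nonneg hm0 (by linarith)
  have h1lam : (1 : ℝ) - lam ≠ 0 := by linarith
  have hRfix : lam * R + m = R := by
    rw [hRdef]
    field_simp
    ring
  have hRinv : ∀ u ∈ Icc t₁ s, ∀ σ : Fin k → Fin N,
      ∀ x ∈ closedBall (0 : EuclideanSpace ℝ (Fin d)) R,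
      Stmt1Aux.wmap (fam L a q u) σ x ∈ closedBall 0 R := by
    intro u hu σ x hx
    rw [mem_closedBall_zero_iff] at hx ⊢
    have h1 : ‖Stmt1Aux.wmap (fam L a q u) σ x‖
        ≤ dist (Stmt1Aux.wmap (fam L a q u) σ x) (Stmt1Aux.wmap (fam L a q u) σ 0)
          + ‖Stmt1Aux.wmap (fam L a q u) σ 0‖ := by
      rw [dist_eq_norm]
      have := norm_add_le (Stmt1Aux.wmap (fam L a q u) σ x - Stmt1Aux.wmap (fam L a q u) σ 0)
        (Stmt1Aux.wmap (fam L a q u) σ 0)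
      simpa using this
    have h2 : dist (Stmt1Aux.wmap (fam L a q u) σ x) (Stmt1Aux.wmap (fam L a q u) σ 0)
        ≤ lam * R := by
      refine le_trans (hlip u hu σ x 0) ?_
      rw [dist_zero_right]
      exact mul_le_mul_of_nonneg_left hx hlam0
    calc ‖Stmt1Aux.wmap (fam L a q u) σ x‖ ≤ lam * R + m :=
          le_trans h1 (add_le_add h2 (hwm0 u hu σ))
      _ = R := hRfix
  have hfamc : ∀ (u : ℝ) (i : Fin N), Continuous (fam L a q u i) := by
    intro u i
    unfold fam
    fun_prop
  -- the attractors are uniformly bounded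
  have hAsub : ∀ u ∈ Icc t₁ s, (A u : Set (EuclideanSpace ℝ (Fin d))) ⊆ closedBall 0 R := by
    intro u hu
    have hu' := hI hu
    have hAu := hA u hu'.1 hu'.2
    refine Stmt1Aux.attractor_subset_of_invariant (hfamc u) hAu
      ⟨0, mem_closedBall_self hR0⟩ (isCompact_closedBall _ _) hk1 ?_
    rw [Stmt1Aux.hutch_iterate]
    exact Set.iUnion_subset fun σ => Set.image_subset_iff.2 fun x hx => hRinv u hu σ x hx
  -- the attractors are fixed by the word Hutchinson operator
  have hfix : ∀ u ∈ Icc t₁ s,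
      hutch (fun σ : Fin k → Fin N => Stmt1Aux.wmap (fam L a q u) σ)
        (A u : Set (EuclideanSpace ℝ (Fin d))) = (A u : Set (EuclideanSpace ℝ (Fin d))) := by
    intro u hu
    have hu' := hI hu
    have hu0 : 0 ≤ u := le_trans ht₁pos.le hu.1
    have hAu := hA u hu'.1 hu'.2
    have hsingle : ∀ (i : Fin N) (x y : EuclideanSpace ℝ (Fin d)),
        dist (fam L a q u i x) (fam L a q u i y) ≤ (s * C) * dist x y := by
      intro i x y
      rw [dist_eq_norm, dist_eq_norm, Stmt1Aux.fam_sub, norm_smul, Real.norm_eq_abs,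
        abs_of_nonneg hu0]
      have h1 : ‖L i (x - y)‖ ≤ ‖L i‖ * ‖x - y‖ := (L i).le_opNorm _
      calc u * ‖L i (x - y)‖ ≤ u * (‖L i‖ * ‖x - y‖) := mul_le_mul_of_nonneg_left h1 hu0
        _ ≤ s * (C * ‖x - y‖) :=
            mul_le_mul hu.2
              (mul_le_mul (hC i) le_rfl (norm_nonneg _) hC0)
              (mul_nonneg (norm_nonneg _) (norm_nonneg _)) hs0.le
        _ = s * C * ‖x - y‖ := (mul_assoc _ _ _).symm
    have h1 : hutch (fam L a q u) (A u : Set (EuclideanSpace ℝ (Fin d))) = A u :=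
      Stmt1Aux.attractor_hutch_eq (hfamc u) (mul_nonneg hs0.le hC0) hsingle hAu
    rw [← Stmt1Aux.hutch_iterate]
    exact Function.iterate_fixed h1 k
  -- ε-δ continuity
  rw [Metric.continuousWithinAt_iff]
  intro ε hε
  set ε' := (1 - lam) * ε / 2 with hε'def
  have hε'pos : 0 < ε' := by
    rw [hε'def]
    exact div_pos (mul_pos (by linarith) hε) two_pos
  have hTc : IsCompact (Icc t₁ s ×ˢ closedBall (0 : EuclideanSpace ℝ (Fin d)) R) :=
    isCompact_Icc.prod (isCompact_closedBall _ _)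
  have hUC := hTc.uniformContinuousOn_of_continuous hψc.continuousOn
  rw [Metric.uniformContinuousOn_iff] at hUC
  obtain ⟨δ₀, hδ₀pos, hδ₀⟩ := hUC ε' hε'pos
  refine ⟨min δ₀ (min (t - t₁) (s - t)),
    lt_min hδ₀pos (lt_min (by linarith) (by linarith)), ?_⟩
  intro u humem hdu
  have hud : |u - t| < min δ₀ (min (t - t₁) (s - t)) := by rwa [Real.dist_eq] at hdu
  have hud1 : |u - t| < δ₀ := lt_of_lt_of_le hud (min_le_left _ _)
  have hud2 : |u - t| < t - t₁ :=
    lt_of_lt_of_le hud (le_trans (min_le_right _ _) (min_le_left _ _))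
  have hud3 : |u - t| < s - t :=
    lt_of_lt_of_le hud (le_trans (min_le_right _ _) (min_le_right _ _))
  rw [abs_lt] at hud2 hud3
  have huI : u ∈ Icc t₁ s := ⟨by linarith [hud2.1], by linarith [hud3.2]⟩
  have hu' := hI huI
  -- displacement bound
  have hdisp : ∀ (σ : Fin k → Fin N), ∀ x ∈ (A t : Set (EuclideanSpace ℝ (Fin d))),
      dist (Stmt1Aux.wmap (fam L a q u) σ x) (Stmt1Aux.wmap (fam L a q t) σ x) ≤ ε' := by
    intro σ x hx
    have hx' : x ∈ closedBall (0 : EuclideanSpace ℝ (Fin d)) R := hAsub t htI hx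
    have hpq : dist ((u, x) : ℝ × EuclideanSpace ℝ (Fin d)) (t, x) < δ₀ := by
      have heq : dist ((u, x) : ℝ × EuclideanSpace ℝ (Fin d)) (t, x) = dist u t := by
        rw [Prod.dist_eq]
        simp [dist_nonneg]
      rw [heq, Real.dist_eq]
      exact hud1
    have h := hδ₀ (u, x) (Set.mk_mem_prod huI hx') (t, x) (Set.mk_mem_prod htI hx') hpq
    exact le_of_lt (lt_of_le_of_lt (dist_le_pi_dist (ψ (u, x)) (ψ (t, x)) σ) h)
  have hmaster : hausdorffDist (A u : Set (EuclideanSpace ℝ (Fin d))) (A t : Set (EuclideanSpace ℝ (Fin d)))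
      ≤ lam * hausdorffDist (A u : Set (EuclideanSpace ℝ (Fin d))) (A t : Set (EuclideanSpace ℝ (Fin d))) + ε' := by
    have h := Stmt1Aux.hutch_hausdorffDist_le (A u).nonempty (A u).isCompact
      (A t).nonempty (A t).isCompact hlam0 hε'pos.le (hlip u huI) hdisp
    rwa [hfix u huI, hfix t htI] at h
  rw [Metric.NonemptyCompacts.dist_eq]
  rw [hε'def] at hmaster
  nlinarith [hausdorffDist_nonneg (s := (A u : Set (EuclideanSpace ℝ (Fin d))))
    (t := (A t : Set (EuclideanSpace ℝ (Fin d)))), hmaster, hε, hlam1]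
end

section
/- Let F_t = {f_{(i,t)}(x) := t·f_i(x) + q_i : 1 ≤ i ≤ N} be a one-parameter affine family on ℝ^d with t_0 = 1/ρ(F). The following are equivalent: (1) F_t is quasi-linear; (2) for each t ∈ [0, t_0) there is a point q_t ∈ ℝ^d that is the unique fixed point of f_{(i,t)} for every i = 1, …, N; (3) the attractor A_t of F_t is a single point for every t ∈ [0, t_0). -/
open Metric Filter Set
open scoped RealInnerProductSpace

noncomputable section
variable {E : Type*} [NormedAddCommGroup E] [NormedSpace ℝ E] {N : ℕ}
  (L : Fin N → E →L[ℝ] E)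

/-- sup over words of length k of norm of product -/
def wsup (k : ℕ) : ℝ := ⨆ σ : Fin k → Fin N, ‖(List.ofFn fun j : Fin k => L (σ j)).prod‖

lemma wsup_nonneg (k : ℕ) : 0 ≤ wsup L k :=
  Real.iSup_nonneg fun _ => norm_nonneg _

lemma le_wsup (k : ℕ) (σ : Fin k → Fin N) :
    ‖(List.ofFn fun j : Fin k => L (σ j)).prod‖ ≤ wsup L k :=
  le_ciSup (f := fun σ : Fin k → Fin N => ‖(List.ofFn fun j : Fin k => L (σ j)).prod‖)
    (Set.finite_range _).bddAbove σ

lemma jsr_eq : jsr L = limsup (fun k : ℕ => wsup L k ^ ((1:ℝ)/(k:ℝ))) atTop := rfl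

lemma jsr_bounded (hρ : 0 < jsr L) :
    IsBoundedUnder (· ≤ ·) atTop (fun k : ℕ => wsup L k ^ ((1:ℝ)/(k:ℝ))) := by
  by_contra hb
  have hempty : {a : ℝ | ∀ᶠ k : ℕ in atTop, wsup L k ^ ((1:ℝ)/(k:ℝ)) ≤ a} = ∅ := by
    ext b
    simp only [Set.mem_setOf_eq, Set.mem_empty_iff_false, iff_false]
    intro hbmem
    exact hb ⟨b, eventually_map.2 hbmem⟩
  have : jsr L = 0 := by
    rw [jsr_eq, limsup_eq, hempty, Real.sInf_empty]
  linarith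

/-- key spectral lemma : an eigenvector of t•L i with eigenvalue 1 forces 1/t ≤ jsr -/
lemma no_unit_eigen (hρ : 0 < jsr L) {t : ℝ} (htpos : 0 < t) (ht : t < 1 / jsr L)
    {i : Fin N} {v : E} (hv : v ≠ 0) (heig : t • L i v = v) : False := by
  have hLv : L i v = t⁻¹ • v := by
    rw [eq_inv_smul_iff₀ htpos.ne']; exact heig
  have hpow : ∀ k : ℕ, ((L i) ^ k) v = (t⁻¹) ^ k • v := by
    intro k
    induction k with
    | zero => simp
    | succ n ih =>
      rw [pow_succ, ContinuousLinearMap.mul_apply, hLv, map_smul, ih, pow_succ]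
      rw [smul_comm, smul_smul]
  have hvpos : 0 < ‖v‖ := norm_pos_iff.2 hv
  have hnorm : ∀ k : ℕ, (t⁻¹) ^ k ≤ ‖(L i) ^ k‖ := by
    intro k
    have h1 : ‖((L i) ^ k) v‖ ≤ ‖(L i) ^ k‖ * ‖v‖ := ContinuousLinearMap.le_opNorm _ _
    rw [hpow, norm_smul, Real.norm_eq_abs, abs_of_nonneg (by positivity)] at h1
    exact le_of_mul_le_mul_right h1 hvpos
  have hws : ∀ k : ℕ, (t⁻¹) ^ k ≤ wsup L k := by
    intro k
    refine (hnorm k).trans ?_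
    have : (List.ofFn fun _ : Fin k => L i).prod = (L i) ^ k := by
      rw [List.ofFn_const, List.prod_replicate]
    calc ‖(L i) ^ k‖ = ‖(List.ofFn fun _ : Fin k => L i).prod‖ := by rw [this]
      _ ≤ wsup L k := le_wsup L k (fun _ => i)
  have hg : ∀ k : ℕ, 1 ≤ k → t⁻¹ ≤ wsup L k ^ ((1:ℝ)/(k:ℝ)) := by
    intro k hk
    have h0 : (0:ℝ) ≤ t⁻¹ ^ k := by positivity
    calc t⁻¹ = ((t⁻¹ ^ k) ^ ((k:ℝ)⁻¹)) := (Real.pow_rpow_inv_natCast (by positivity) (by omega)).symm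
      _ ≤ wsup L k ^ ((k:ℝ)⁻¹) := Real.rpow_le_rpow h0 (hws k) (by positivity)
      _ = wsup L k ^ ((1:ℝ)/(k:ℝ)) := by rw [one_div]
  have hjlt : jsr L < t⁻¹ := by
    have h1 : t * jsr L < 1 := (lt_div_iff₀ hρ).1 ht
    have h2 : jsr L < 1 / t := (lt_div_iff₀ htpos).2 (by linarith)
    rwa [one_div] at h2
  have : t⁻¹ ≤ jsr L := by
    rw [jsr_eq]
    refine le_limsup_of_frequently_le ?_ (jsr_bounded L hρ)
    exact ((eventually_atTop.2 ⟨1, hg⟩).frequently)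
  exact absurd this (not_le.2 hjlt)

variable (a q : Fin N → E)

lemma fam_sub {t : ℝ} {i : Fin N} (x y : E) :
    fam L a q t i x - fam L a q t i y = t • (L i) (x - y) := by
  simp only [fam, map_sub, smul_sub, smul_add]
  abel

lemma fixed_unique (hρ : 0 < jsr L) {t : ℝ} (ht0 : 0 ≤ t) (ht : t < 1 / jsr L)
    {i : Fin N} {x y : E} (hx : fam L a q t i x = x) (hy : fam L a q t i y = y) : x = y := by
  rcases eq_or_lt_of_le ht0 with h0 | htpos
  · rw [fam, ← h0, zero_smul, zero_add] at hx hy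
    rw [← hx, ← hy]
  · by_contra hne
    have hv : x - y ≠ 0 := sub_ne_zero.2 hne
    have : t • (L i) (x - y) = x - y := by
      rw [← fam_sub L a q, hx, hy]
    exact no_unit_eigen L hρ htpos ht hv this

lemma fixed_exists [FiniteDimensional ℝ E] (hρ : 0 < jsr L) {t : ℝ} (ht0 : 0 ≤ t)
    (ht : t < 1 / jsr L) (i : Fin N) : ∃ x : E, fam L a q t i x = x := by
  set M : E →ₗ[ℝ] E := LinearMap.id - t • ((L i) : E →ₗ[ℝ] E) with hM
  have hinj : Function.Injective M := by
    rw [← LinearMap.ker_eq_bot, LinearMap.ker_eq_bot']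
    intro v hv
    simp only [hM, LinearMap.sub_apply, LinearMap.id_apply, LinearMap.smul_apply,
      ContinuousLinearMap.coe_coe] at hv
    have heig : t • (L i) v = v := (sub_eq_zero.1 hv).symm
    rcases eq_or_lt_of_le ht0 with h0 | htpos
    · rw [← h0, zero_smul] at heig
      exact heig.symm
    · by_contra hvne
      exact no_unit_eigen L hρ htpos ht hvne heig
  obtain ⟨x, hx⟩ := (LinearMap.injective_iff_surjective.1 hinj) (t • a i + q i)
  refine ⟨x, ?_⟩
  have hx' : x - t • (L i) x = t • a i + q i := by
    simpa [hM, LinearMap.sub_apply] using hx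
  have hx2 : x = t • a i + q i + t • (L i) x := sub_eq_iff_eq_add.1 hx'
  rw [fam, smul_add]
  conv_rhs => rw [hx2]
  abel

/-- composition of the maps along a word -/
def wordMap (t : ℝ) : (n : ℕ) → (Fin n → Fin N) → E → E
  | 0, _ => id
  | n+1, σ => fam L a q t (σ 0) ∘ wordMap t n (Fin.tail σ)

lemma hutch_iterate (hN : 2 ≤ N) (t : ℝ) (n : ℕ) (s : Set E) :
    (hutch (fam L a q t))^[n] s = ⋃ σ : Fin n → Fin N, wordMap L a q t n σ '' s := by
  induction n with
  | zero =>
    haveI : Nonempty (Fin 0 → Fin N) := ⟨fun i => i.elim0⟩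
    simp [wordMap, Set.image_id, Set.iUnion_const]
  | succ n ih =>
    rw [Function.iterate_succ_apply', ih]
    ext x
    simp only [hutch, Set.mem_iUnion, Set.mem_image]
    constructor
    · rintro ⟨i, y, ⟨σ, z, hz, rfl⟩, rfl⟩
      exact ⟨Fin.cons i σ, z, hz, by
        simp [wordMap, Fin.cons_zero, Fin.tail_cons]⟩
    · rintro ⟨τ, z, hz, rfl⟩
      exact ⟨τ 0, wordMap L a q t n (Fin.tail τ) z, ⟨Fin.tail τ, z, hz, rfl⟩, rfl⟩

lemma wordMap_sub (t : ℝ) (n : ℕ) (σ : Fin n → Fin N) (x y : E) :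
    wordMap L a q t n σ x - wordMap L a q t n σ y =
      t ^ n • ((List.ofFn fun j : Fin n => L (σ j)).prod) (x - y) := by
  induction n with
  | zero => simp [wordMap]
  | succ n ih =>
    simp only [wordMap, Function.comp_apply, fam_sub L a q, ih (Fin.tail σ)]
    rw [List.ofFn_succ, List.prod_cons, map_smul, ContinuousLinearMap.mul_apply]
    rw [smul_smul, pow_succ, mul_comm]
    rfl

lemma wordMap_dist (t : ℝ) (ht0 : 0 ≤ t) (n : ℕ) (σ : Fin n → Fin N) (x y : E) :
    dist (wordMap L a q t n σ x) (wordMap L a q t n σ y) ≤ (t ^ n * wsup L n) * dist x y := by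
  rw [dist_eq_norm, dist_eq_norm, wordMap_sub, norm_smul, Real.norm_eq_abs,
    abs_of_nonneg (by positivity)]
  calc t ^ n * ‖((List.ofFn fun j : Fin n => L (σ j)).prod) (x - y)‖
      ≤ t ^ n * (‖(List.ofFn fun j : Fin n => L (σ j)).prod‖ * ‖x - y‖) := by
        gcongr
        exact ContinuousLinearMap.le_opNorm _ _
    _ ≤ t ^ n * (wsup L n * ‖x - y‖) :=
        mul_le_mul_of_nonneg_left
          (mul_le_mul_of_nonneg_right (le_wsup L n σ) (norm_nonneg _)) (pow_nonneg ht0 n)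
    _ = (t ^ n * wsup L n) * ‖x - y‖ := by ring

lemma hutch_iter_hdist (hN : 2 ≤ N) {t : ℝ} (ht0 : 0 ≤ t) (n : ℕ) {s u : Set E}
    (hsne : s.Nonempty) (hsc : IsCompact s) (hune : u.Nonempty) (huc : IsCompact u) :
    hausdorffDist ((hutch (fam L a q t))^[n] s) ((hutch (fam L a q t))^[n] u) ≤
      (t ^ n * wsup L n) * hausdorffDist s u := by
  have hfin : EMetric.hausdorffEdist s u ≠ ⊤ :=
    hausdorffEdist_ne_top_of_nonempty_of_bounded hsne hune hsc.isBounded huc.isBounded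
  have hC : 0 ≤ t ^ n * wsup L n := mul_nonneg (by positivity) (wsup_nonneg L n)
  rw [hutch_iterate L a q hN, hutch_iterate L a q hN]
  refine hausdorffDist_le_of_mem_dist (mul_nonneg hC hausdorffDist_nonneg) ?_ ?_
  · rintro x hx
    rw [Set.mem_iUnion] at hx
    obtain ⟨σ, y, hy, rfl⟩ := hx
    obtain ⟨z, hz, hdz⟩ := huc.exists_infDist_eq_dist hune y
    refine ⟨wordMap L a q t n σ z, Set.mem_iUnion.2 ⟨σ, z, hz, rfl⟩, ?_⟩
    calc dist (wordMap L a q t n σ y) (wordMap L a q t n σ z)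
        ≤ (t ^ n * wsup L n) * dist y z := wordMap_dist L a q t ht0 n σ y z
      _ = (t ^ n * wsup L n) * infDist y u := by rw [hdz]
      _ ≤ (t ^ n * wsup L n) * hausdorffDist s u := by
          gcongr
          exact infDist_le_hausdorffDist_of_mem hy hfin
  · rintro x hx
    rw [Set.mem_iUnion] at hx
    obtain ⟨σ, y, hy, rfl⟩ := hx
    obtain ⟨z, hz, hdz⟩ := hsc.exists_infDist_eq_dist hsne y
    refine ⟨wordMap L a q t n σ z, Set.mem_iUnion.2 ⟨σ, z, hz, rfl⟩, ?_⟩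
    calc dist (wordMap L a q t n σ y) (wordMap L a q t n σ z)
        ≤ (t ^ n * wsup L n) * dist y z := wordMap_dist L a q t ht0 n σ y z
      _ = (t ^ n * wsup L n) * infDist y s := by rw [hdz]
      _ ≤ (t ^ n * wsup L n) * hausdorffDist s u := by
          gcongr
          replace hfin : Metric.hausdorffEDist u s ≠ ⊤ := by
            rw [Metric.hausdorffEDist_comm]; exact hfin
          calc infDist y s ≤ hausdorffDist u s := infDist_le_hausdorffDist_of_mem hy hfin
            _ = hausdorffDist s u := hausdorffDist_comm

lemma exists_rate (hρ : 0 < jsr L) {t : ℝ} (ht0 : 0 ≤ t) (ht : t < 1 / jsr L) :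
    ∃ r : ℝ, 0 ≤ r ∧ r < 1 ∧ ∀ᶠ n : ℕ in atTop, t ^ n * wsup L n ≤ r ^ n := by
  rcases eq_or_lt_of_le ht0 with h0 | htpos
  · refine ⟨0, le_refl _, one_pos, ?_⟩
    filter_upwards [eventually_ge_atTop 1] with n hn
    rw [← h0, zero_pow (show n ≠ 0 by omega), zero_mul]
  · have hjlt : jsr L < 1 / t := by
      have h1 : t * jsr L < 1 := (lt_div_iff₀ hρ).1 ht
      exact (lt_div_iff₀ htpos).2 (by linarith)
    set b : ℝ := (jsr L + 1 / t) / 2 with hb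
    have hb0 : 0 < b := by
      have : 0 < 1 / t := by positivity
      simp only [hb]; linarith
    have hjb : jsr L < b := by simp only [hb]; linarith
    have hbt : b < 1 / t := by simp only [hb]; linarith
    have hev : ∀ᶠ k : ℕ in atTop, wsup L k ^ ((1:ℝ)/(k:ℝ)) < b := by
      refine eventually_lt_of_limsup_lt ?_ (jsr_bounded L hρ)
      rw [← jsr_eq]; exact hjb
    refine ⟨t * b, by positivity, ?_, ?_⟩
    · calc t * b < t * (1 / t) := by
            exact mul_lt_mul_of_pos_left hbt htpos
        _ = 1 := by field_simp
    · filter_upwards [hev, eventually_ge_atTop 1] with n hn hn1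
      have hw : wsup L n < b ^ n := by
        have heq : (wsup L n ^ ((1:ℝ)/(n:ℝ))) ^ n = wsup L n := by
          rw [one_div]
          exact Real.rpow_inv_natCast_pow (wsup_nonneg L n) (by omega)
        calc wsup L n = (wsup L n ^ ((1:ℝ)/(n:ℝ))) ^ n := heq.symm
          _ < b ^ n := by
              apply pow_lt_pow_left₀ hn (Real.rpow_nonneg (wsup_nonneg L n) _) (by omega)
      calc t ^ n * wsup L n ≤ t ^ n * b ^ n :=
            mul_le_mul_of_nonneg_left hw.le (by positivity)
        _ = (t * b) ^ n := (mul_pow t b n).symm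

lemma hutch_isCompact {t : ℝ} {K : Set E} (hK : IsCompact K) :
    IsCompact (hutch (fam L a q t) K) := by
  refine isCompact_iUnion fun i => hK.image ?_
  have : Continuous fun x : E => t • ((L i) x + a i) + q i := by
    exact (((L i).continuous.add continuous_const).const_smul t).add continuous_const
  exact this

lemma hutch_nonempty (hN : 2 ≤ N) {t : ℝ} {K : Set E} (hK : K.Nonempty) :
    (hutch (fam L a q t) K).Nonempty := by
  obtain ⟨x, hx⟩ := hK
  exact ⟨fam L a q t ⟨0, by omega⟩ x,
    Set.mem_iUnion.2 ⟨⟨0, by omega⟩, Set.mem_image_of_mem _ hx⟩⟩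

open TopologicalSpace in
lemma exists_attractor [CompleteSpace E] (hN : 2 ≤ N) (hρ : 0 < jsr L) {t : ℝ}
    (ht0 : 0 ≤ t) (ht : t < 1 / jsr L) : ∃ A : Set E, IsAttractor (fam L a q t) A := by
  obtain ⟨r, hr0, hr1, hev⟩ := exists_rate L hρ ht0 ht
  obtain ⟨n₀, hn₀⟩ := eventually_atTop.1 hev
  set f := fam L a q t with hf
  let T : NonemptyCompacts E → NonemptyCompacts E := fun s =>
    ⟨⟨hutch f s, hutch_isCompact L a q s.isCompact⟩, hutch_nonempty L a q hN s.nonempty⟩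
  have hTcar : ∀ (n : ℕ) (s : NonemptyCompacts E),
      ((T^[n] s : NonemptyCompacts E) : Set E) = (hutch f)^[n] (s : Set E) := by
    intro n
    induction n with
    | zero => intro s; rfl
    | succ n ih =>
      intro s
      rw [Function.iterate_succ_apply', Function.iterate_succ_apply']
      show hutch f ((T^[n] s : NonemptyCompacts E) : Set E) = _
      rw [ih s]
  have hdistX : ∀ (n : ℕ) (s u : NonemptyCompacts E),
      dist (T^[n] s) (T^[n] u) ≤ (t ^ n * wsup L n) * dist s u := by
    intro n s u
    rw [NonemptyCompacts.dist_eq, NonemptyCompacts.dist_eq, hTcar, hTcar]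
    exact hutch_iter_hdist L a q hN ht0 n s.nonempty s.isCompact u.nonempty u.isCompact
  set k := max n₀ 1 with hk
  have hCk : t ^ k * wsup L k ≤ r ^ k := hn₀ k (le_max_left _ _)
  have hCklt : t ^ k * wsup L k < 1 :=
    hCk.trans_lt (pow_lt_one₀ hr0 hr1 (by omega))
  have hCk0 : 0 ≤ t ^ k * wsup L k := mul_nonneg (by positivity) (wsup_nonneg L k)
  have hcontr : ContractingWith (t ^ k * wsup L k).toNNReal (T^[k]) := by
    constructor
    · exact_mod_cast Real.toNNReal_lt_one.2 hCklt
    · apply LipschitzWith.of_dist_le_mul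
      intro s u
      rw [Real.coe_toNNReal _ hCk0]
      exact hdistX k s u
  haveI : Nonempty (NonemptyCompacts E) :=
    ⟨⟨⟨{0}, isCompact_singleton⟩, Set.singleton_nonempty 0⟩⟩
  set A0 : NonemptyCompacts E := ContractingWith.fixedPoint (T^[k]) hcontr with hA0def
  have hA0 : T^[k] A0 = A0 := hcontr.fixedPoint_isFixedPt
  have hTA0 : T A0 = A0 := by
    have h1 : Function.IsFixedPt (T^[k]) (T A0) := by
      show T^[k] (T A0) = T A0
      rw [← Function.iterate_succ_apply, Function.iterate_succ_apply', hA0]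
    exact hcontr.fixedPoint_unique' h1 hA0
  have hA0iter : ∀ n : ℕ, T^[n] A0 = A0 := fun n => Function.iterate_fixed hTA0 n
  refine ⟨(A0 : Set E), A0.nonempty, A0.isCompact, ?_⟩
  intro K hKne hKc
  set KX : NonemptyCompacts E := ⟨⟨K, hKc⟩, hKne⟩ with hKX
  have key : ∀ n : ℕ, hausdorffDist ((hutch f)^[n] K) (A0 : Set E) ≤
      (t ^ n * wsup L n) * dist KX A0 := by
    intro n
    have h2 := hdistX n KX A0
    rw [hA0iter n] at h2
    rw [NonemptyCompacts.dist_eq, hTcar] at h2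
    exact h2
  refine squeeze_zero' (g := fun n : ℕ => r ^ n * dist KX A0) (Eventually.of_forall fun n => hausdorffDist_nonneg) ?_ ?_
  · filter_upwards [hev] with n hn
    exact (key n).trans (mul_le_mul_of_nonneg_right hn dist_nonneg)
  · have h3 := (tendsto_pow_atTop_nhds_zero_of_lt_one hr0 hr1).mul_const (dist KX A0)
    rwa [zero_mul] at h3

lemma fixed_of_quasi (hq : IsQuasiLinearFamily L a q) {t : ℝ} (ht0 : 0 ≤ t)
    (ht : t < 1 / jsr L) : ∃ p : E, ∀ i, fam L a q t i p = p := by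
  obtain ⟨h, hh⟩ := hq t ht0 ht
  refine ⟨h.symm 0, fun i => ?_⟩
  obtain ⟨M, hM⟩ := hh i
  rw [hM, AffineEquiv.apply_symm_apply, map_zero]

lemma quasi_of_fixed
    (hfix : ∀ t : ℝ, 0 ≤ t → t < 1 / jsr L → ∃ p : E, ∀ i, fam L a q t i p = p) :
    IsQuasiLinearFamily L a q := by
  intro t ht0 ht
  obtain ⟨p, hp⟩ := hfix t ht0 ht
  refine ⟨AffineEquiv.constVAdd ℝ E (-p), fun i => ?_⟩
  refine ⟨t • ((L i : E →ₗ[ℝ] E)), fun x => ?_⟩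
  rw [← AffineEquiv.apply_eq_iff_eq_symm_apply]
  have hfp := hp i
  simp only [fam, AffineEquiv.constVAdd_apply, vadd_eq_add, LinearMap.smul_apply,
    ContinuousLinearMap.coe_coe, map_add, map_neg, smul_add, smul_neg] at hfp ⊢
  have h2 : t • (L i) p = p - (t • a i + q i) := by
    rw [eq_sub_iff_add_eq, ← add_assoc]; exact hfp
  rw [h2]
  abel

end  -- close variable section? no, section still open; stmt4 below with own binders


/-- A one-parameter affine family is quasi-linear iff for each `t ∈ [0, t₀)`
all maps `f_{(i,t)}` have a common unique fixed point, iff the attractor `A_t` is a single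
point for every `t ∈ [0, t₀)`. -/
theorem stmt4 {d N : ℕ} (hN : 2 ≤ N)
    (L : Fin N → EuclideanSpace ℝ (Fin d) →L[ℝ] EuclideanSpace ℝ (Fin d))
    (hL : ∀ i, Function.Bijective (L i))
    (a q : Fin N → EuclideanSpace ℝ (Fin d))
    (hρ : 0 < jsr L) :
    (IsQuasiLinearFamily L a q ↔
      ∀ t : ℝ, 0 ≤ t → t < 1 / jsr L →
        ∃ p : EuclideanSpace ℝ (Fin d), ∀ i : Fin N,
          fam L a q t i p = p ∧ ∀ x, fam L a q t i x = x → x = p) ∧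
    (IsQuasiLinearFamily L a q ↔
      ∀ t : ℝ, 0 ≤ t → t < 1 / jsr L →
        ∀ A : Set (EuclideanSpace ℝ (Fin d)), IsAttractor (fam L a q t) A →
          ∃ p, A = {p}) := by
  haveI : Nonempty (Fin N) := ⟨⟨0, by omega⟩⟩
  constructor
  · constructor
    · intro hq t ht0 ht
      obtain ⟨p, hp⟩ := fixed_of_quasi L a q hq ht0 ht
      exact ⟨p, fun i => ⟨hp i, fun x hx => fixed_unique L a q hρ ht0 ht hx (hp i)⟩⟩
    · intro hfix
      apply quasi_of_fixed
      intro t ht0 ht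
      obtain ⟨p, hp⟩ := hfix t ht0 ht
      exact ⟨p, fun i => (hp i).1⟩
  · constructor
    · intro hq t ht0 ht A hA
      obtain ⟨p, hp⟩ := fixed_of_quasi L a q hq ht0 ht
      have h1 : hutch (fam L a q t) {p} = {p} := by
        unfold hutch
        have : ∀ i : Fin N, fam L a q t i '' {p} = {p} := by
          intro i; rw [Set.image_singleton, hp i]
        simp only [this, Set.iUnion_const]
      have h2 : ∀ n : ℕ, (hutch (fam L a q t))^[n] ({p} : Set _) = {p} :=
        fun n => Function.iterate_fixed h1 n
      have h3 := hA.2.2 {p} (Set.singleton_nonempty p) isCompact_singleton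
      simp only [h2] at h3
      have h4 : hausdorffDist ({p} : Set (EuclideanSpace ℝ (Fin d))) A = 0 :=
        tendsto_nhds_unique tendsto_const_nhds h3
      have h5 : ({p} : Set (EuclideanSpace ℝ (Fin d))) = A :=
        (IsClosed.hausdorffDist_zero_iff_eq isClosed_singleton hA.2.1.isClosed
          (hausdorffEdist_ne_top_of_nonempty_of_bounded (Set.singleton_nonempty p) hA.1
            Bornology.isBounded_singleton hA.2.1.isBounded)).1 h4
      exact ⟨p, h5.symm⟩
    · intro hsing
      apply quasi_of_fixed
      intro t ht0 ht
      obtain ⟨A, hA⟩ := exists_attractor L a q hN hρ ht0 ht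
      obtain ⟨p, rfl⟩ := hsing t ht0 ht A hA
      refine ⟨p, fun i => ?_⟩
      obtain ⟨x, hx⟩ := fixed_exists L a q hρ ht0 ht i
      have hmem : ∀ n : ℕ, x ∈ (hutch (fam L a q t))^[n] ({x} : Set _) := by
        intro n
        induction n with
        | zero => exact Set.mem_singleton x
        | succ n ih =>
          rw [Function.iterate_succ_apply']
          exact Set.mem_iUnion.2 ⟨i, x, ih, hx⟩
      have hcomp : ∀ n : ℕ, IsCompact ((hutch (fam L a q t))^[n] ({x} : Set _)) := by
        intro n
        induction n with
        | zero => exact isCompact_singleton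
        | succ n ih =>
          rw [Function.iterate_succ_apply']
          exact hutch_isCompact L a q ih
      have h3 := hA.2.2 {x} (Set.singleton_nonempty x) isCompact_singleton
      have h6 : ∀ n : ℕ, dist x p ≤
          hausdorffDist ((hutch (fam L a q t))^[n] ({x} : Set _)) ({p} : Set _) := by
        intro n
        have hfin : EMetric.hausdorffEdist ((hutch (fam L a q t))^[n] ({x} : Set _))
            ({p} : Set (EuclideanSpace ℝ (Fin d))) ≠ ⊤ :=
          hausdorffEdist_ne_top_of_nonempty_of_bounded ⟨x, hmem n⟩ (Set.singleton_nonempty p)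
            (hcomp n).isBounded Bornology.isBounded_singleton
        have h7 := infDist_le_hausdorffDist_of_mem (hmem n) hfin
        rwa [Metric.infDist_singleton] at h7
      have h8 : dist x p ≤ 0 := ge_of_tendsto h3 (Eventually.of_forall h6)
      have h9 : x = p := by rwa [← dist_le_zero]
      rw [← h9]
      exact hx
end

section
/- Let F be an affine IFS on ℝ^d and let G ⊆ F be a nonempty subset. If F has an attractor A_F, then G has an attractor A_G, and A_G ⊆ A_F. -/
open Metric Filter Set
open scoped RealInnerProductSpace

open TopologicalSpace

namespace Stmt11Aux

/-- Composition of the maps along a word, last letter applied first. -/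
def wordMap {ι E : Type*} (g : ι → E → E) : ∀ m : ℕ, (Fin m → ι) → E → E
  | 0, _ => id
  | m + 1, σ => wordMap g m (Fin.init σ) ∘ g (σ (Fin.last m))

theorem hutch_iterate {ι E : Type*} (g : ι → E → E) (m : ℕ) (K : Set E) :
    (hutch g)^[m] K = ⋃ σ : Fin m → ι, wordMap g m σ '' K := by
  induction m generalizing K with
  | zero =>
    haveI : Nonempty (Fin 0 → ι) := ⟨Fin.elim0⟩
    simp only [Function.iterate_zero, id_eq, wordMap, Set.image_id']
    exact (Set.iUnion_const (ι := Fin 0 → ι) K).symm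
  | succ m ih =>
    rw [Function.iterate_succ_apply, ih]
    ext x
    simp only [mem_iUnion, mem_image, hutch]
    constructor
    · rintro ⟨σ, x', ⟨i, k, hk, rfl⟩, rfl⟩
      refine ⟨Fin.snoc σ i, k, hk, ?_⟩
      simp [wordMap, Fin.init_snoc, Fin.snoc_last]
    · rintro ⟨σ, k, hk, rfl⟩
      exact ⟨Fin.init σ, g (σ (Fin.last m)) k, ⟨σ (Fin.last m), k, hk, rfl⟩, rfl⟩

/-- Product of linear parts along a word. -/
def wordL {E : Type*} [NormedAddCommGroup E] [NormedSpace ℝ E] {N : ℕ}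
    (L : Fin N → E →L[ℝ] E) : ∀ m : ℕ, (Fin m → Fin N) → (E →L[ℝ] E)
  | 0, _ => ContinuousLinearMap.id ℝ E
  | m + 1, σ => (wordL L m (Fin.init σ)).comp (L (σ (Fin.last m)))

theorem wordMap_sub {E : Type*} [NormedAddCommGroup E] [NormedSpace ℝ E] {N : ℕ}
    (L : Fin N → E →L[ℝ] E) (a : Fin N → E) (f : Fin N → E → E)
    (hf : ∀ i x, f i x = L i x + a i) :
    ∀ (m : ℕ) (σ : Fin m → Fin N) (x y : E),
      wordMap f m σ x - wordMap f m σ y = wordL L m σ (x - y)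
  | 0, _, _, _ => rfl
  | m + 1, σ, x, y => by
    simp only [wordMap, Function.comp_apply, wordL, ContinuousLinearMap.coe_comp',
      Function.comp_apply]
    rw [wordMap_sub L a f hf m _ _ _, hf, hf]
    congr 1
    rw [add_sub_add_right_eq_sub, ← map_sub]

theorem wordMap_lipschitz {E : Type*} [NormedAddCommGroup E] [NormedSpace ℝ E] {N : ℕ}
    (L : Fin N → E →L[ℝ] E) (a : Fin N → E) (f : Fin N → E → E)
    (hf : ∀ i x, f i x = L i x + a i) (m : ℕ) (σ : Fin m → Fin N) :
    LipschitzWith ‖wordL L m σ‖₊ (wordMap f m σ) :=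
  LipschitzWith.of_dist_le_mul fun x y => by
    rw [dist_eq_norm, dist_eq_norm, wordMap_sub L a f hf]
    exact (wordL L m σ).le_opNorm _

theorem wordMap_subtype {E : Type*} {N : ℕ} (f : Fin N → E → E) (s : Finset (Fin N)) :
    ∀ (m : ℕ) (σ : Fin m → {i // i ∈ s}),
      wordMap (fun i : {i // i ∈ s} => f i.1) m σ = wordMap f m fun j => (σ j).1
  | 0, _ => rfl
  | m + 1, σ => by
    simp only [wordMap]
    rw [wordMap_subtype f s m (Fin.init σ)]
    rfl

theorem hutch_isCompact {ι E : Type*} [Finite ι] [TopologicalSpace E] (w : ι → E → E)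
    (hw : ∀ i, Continuous (w i)) {K : Set E} (hK : IsCompact K) : IsCompact (hutch w K) :=
  isCompact_iUnion fun i => hK.image (hw i)

theorem hutch_nonempty {ι E : Type*} [Nonempty ι] (w : ι → E → E) {K : Set E}
    (hK : K.Nonempty) : (hutch w K).Nonempty := by
  obtain ⟨i⟩ := (inferInstance : Nonempty ι)
  exact ⟨w i hK.choose, mem_iUnion.2 ⟨i, mem_image_of_mem _ hK.choose_spec⟩⟩

/-- One-sided Hausdorff-edist estimate for Hutchinson operators of Lipschitz families. -/
theorem hutch_edist_le {ι E : Type*} [Nonempty ι] [MetricSpace E] (w : ι → E → E)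
    {c : NNReal} (hw : ∀ i, LipschitzWith c (w i)) {K K' : Set E}
    (hK : IsCompact K) (hK' : IsCompact K') (hKn : K.Nonempty) (hK'n : K'.Nonempty) :
    EMetric.hausdorffEdist (hutch w K) (hutch w K') ≤ c * EMetric.hausdorffEdist K K' := by
  have main : ∀ (S S' : Set E), IsCompact S' → S'.Nonempty →
      ∀ x ∈ hutch w S, ∃ y ∈ hutch w S',
        edist x y ≤ c * EMetric.hausdorffEdist S S' := by
    intro S S' hS' hS'n x hx
    rw [hutch, mem_iUnion] at hx
    obtain ⟨i, k, hk, rfl⟩ := hx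
    obtain ⟨k', hk', hek⟩ := hS'.exists_infEdist_eq_edist hS'n k
    refine ⟨w i k', mem_iUnion.2 ⟨i, mem_image_of_mem _ hk'⟩, ?_⟩
    calc edist (w i k) (w i k') ≤ c * edist k k' := hw i k k'
      _ = c * EMetric.infEdist k S' := by rw [EMetric.infEdist, hek]
      _ ≤ c * EMetric.hausdorffEdist S S' :=
        mul_le_mul_right (EMetric.infEdist_le_hausdorffEdist_of_mem hk) _
  apply EMetric.hausdorffEdist_le_of_mem_edist
  · exact main K K' hK' hK'n
  · intro x hx
    obtain ⟨y, hy, hxy⟩ := main K' K hK hKn x hx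
    exact ⟨y, hy, by rw [EMetric.hausdorffEdist] at hxy ⊢; rwa [EMetric.hausdorffEdist_comm (s := K') (t := K)] at hxy⟩


theorem hutch_iterate_compact {ι E : Type*} [Finite ι] [Nonempty ι] [TopologicalSpace E]
    (w : ι → E → E) (hw : ∀ i, Continuous (w i)) (n : ℕ) {K : Set E} (hK : IsCompact K)
    (hKn : K.Nonempty) : IsCompact ((hutch w)^[n] K) ∧ ((hutch w)^[n] K).Nonempty := by
  induction n with
  | zero => exact ⟨hK, hKn⟩
  | succ n ih =>
    rw [Function.iterate_succ_apply']
    exact ⟨hutch_isCompact w hw ih.1, hutch_nonempty w ih.2⟩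

end Stmt11Aux

/-- If an affine IFS `F` on `ℝ^d` has an attractor `A_F` and `G` is a
nonempty subfamily of `F`, then `G` has an attractor `A_G` and `A_G ⊆ A_F`. -/
theorem stmt11 {d N : ℕ} (hN : 2 ≤ N)
    (L : Fin N → EuclideanSpace ℝ (Fin d) →L[ℝ] EuclideanSpace ℝ (Fin d))
    (hL : ∀ i, Function.Bijective (L i))
    (a : Fin N → EuclideanSpace ℝ (Fin d))
    (f : Fin N → EuclideanSpace ℝ (Fin d) → EuclideanSpace ℝ (Fin d))
    (hf : ∀ i x, f i x = L i x + a i)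
    (s : Finset (Fin N)) (hs : s.Nonempty)
    (A : Set (EuclideanSpace ℝ (Fin d))) (hA : IsAttractor f A) :
    ∃ B : Set (EuclideanSpace ℝ (Fin d)),
      IsAttractor (fun i : {i // i ∈ s} => f i.1) B ∧ B ⊆ A := by
  classical
  haveI : Nonempty (Fin N) := ⟨⟨0, by omega⟩⟩
  obtain ⟨Ane, Acomp, Atend⟩ := hA
  have hfc : ∀ i, Continuous (f i) := by
    intro i
    have h : f i = fun x => L i x + a i := funext (hf i)
    rw [h]
    exact (L i).continuous.add continuous_const
  -- Step 1: some iterate is uniformly contracting on all words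
  have key : ∃ m : ℕ, 0 < m ∧ ∀ σ : Fin m → Fin N, ‖Stmt11Aux.wordL L m σ‖ < 1 := by
    by_contra hcon
    push_neg at hcon
    set R : ℝ := diam A + 5 with hRdef
    have hR0 : 0 < R := by
      have := diam_nonneg (s := A)
      simp only [hRdef]; linarith
    have hKc : IsCompact (closedBall (0 : EuclideanSpace ℝ (Fin d)) R) :=
      isCompact_closedBall _ _
    have hKn : (closedBall (0 : EuclideanSpace ℝ (Fin d)) R).Nonempty :=
      ⟨0, mem_closedBall_self hR0.le⟩
    have htend := Atend _ hKn hKc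
    have hev : ∀ᶠ n in atTop,
        hausdorffDist ((hutch f)^[n] (closedBall 0 R)) A < 1 :=
      htend.eventually_lt_const one_pos
    obtain ⟨m, hmlt, hm0⟩ := (hev.and (eventually_gt_atTop 0)).exists
    obtain ⟨σ, hσ⟩ := hcon m hm0
    obtain ⟨v, hv1, hv2⟩ := (Stmt11Aux.wordL L m σ).exists_lt_apply_of_lt_opNorm
      (by linarith : (1 : ℝ)/2 < ‖Stmt11Aux.wordL L m σ‖)
    set S := (hutch f)^[m] (closedBall (0 : EuclideanSpace ℝ (Fin d)) R) with hSdef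
    have hmem : ∀ x ∈ closedBall (0 : EuclideanSpace ℝ (Fin d)) R,
        Stmt11Aux.wordMap f m σ x ∈ S := by
      intro x hx
      rw [hSdef, Stmt11Aux.hutch_iterate]
      exact mem_iUnion.2 ⟨σ, mem_image_of_mem _ hx⟩
    have hSc := Stmt11Aux.hutch_iterate_compact f hfc m hKc hKn
    have hfin : EMetric.hausdorffEdist S A ≠ ⊤ :=
      hausdorffEdist_ne_top_of_nonempty_of_bounded hSc.2 Ane hSc.1.isBounded
        Acomp.isBounded
    have hmemv : (R • v) ∈ closedBall (0 : EuclideanSpace ℝ (Fin d)) R := by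
      rw [mem_closedBall, dist_zero_right, norm_smul, Real.norm_eq_abs,
        abs_of_nonneg hR0.le]
      nlinarith [hv1.le, norm_nonneg v]
    have hmemv' : (-(R • v)) ∈ closedBall (0 : EuclideanSpace ℝ (Fin d)) R := by
      rwa [mem_closedBall, dist_zero_right, norm_neg, ← dist_zero_right, ← mem_closedBall]
    have hp : Stmt11Aux.wordMap f m σ (R • v) ∈ S := hmem _ hmemv
    have hq : Stmt11Aux.wordMap f m σ (-(R • v)) ∈ S := hmem _ hmemv'
    have hpq : R ≤ dist (Stmt11Aux.wordMap f m σ (R • v))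
        (Stmt11Aux.wordMap f m σ (-(R • v))) := by
      rw [dist_eq_norm, Stmt11Aux.wordMap_sub L a f hf]
      have h2 : R • v - -(R • v) = (2 * R) • v := by
        rw [sub_neg_eq_add, ← two_smul ℝ, smul_smul]
      rw [h2, map_smul, norm_smul, Real.norm_eq_abs, abs_of_nonneg (by linarith : (0:ℝ) ≤ 2 * R)]
      nlinarith [hv2]
    have hinfp : infDist (Stmt11Aux.wordMap f m σ (R • v)) A < 1 :=
      lt_of_le_of_lt (infDist_le_hausdorffDist_of_mem hp hfin) hmlt
    have hinfq : infDist (Stmt11Aux.wordMap f m σ (-(R • v))) A < 1 :=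
      lt_of_le_of_lt (infDist_le_hausdorffDist_of_mem hq hfin) hmlt
    obtain ⟨ap, hap, hdap⟩ := (infDist_lt_iff Ane).1 hinfp
    obtain ⟨aq, haq, hdaq⟩ := (infDist_lt_iff Ane).1 hinfq
    have hAA : dist ap aq ≤ diam A := dist_le_diam_of_mem Acomp.isBounded hap haq
    have h4 : dist (Stmt11Aux.wordMap f m σ (R • v)) (Stmt11Aux.wordMap f m σ (-(R • v)))
        ≤ dist (Stmt11Aux.wordMap f m σ (R • v)) ap + dist ap aq
          + dist aq (Stmt11Aux.wordMap f m σ (-(R • v))) := dist_triangle4 _ _ _ _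
    rw [dist_comm aq] at h4
    simp only [hRdef] at hpq
    linarith
  obtain ⟨m, hm0, hmlt⟩ := key
  haveI hι' : Nonempty {i // i ∈ s} := ⟨⟨hs.choose, hs.choose_spec⟩⟩
  have hgc : ∀ i : {i // i ∈ s}, Continuous ((fun i : {i // i ∈ s} => f i.1) i) :=
    fun i => hfc i.1
  set g : {i // i ∈ s} → EuclideanSpace ℝ (Fin d) → EuclideanSpace ℝ (Fin d) :=
    fun i => f i.1 with hgdef
  set c : NNReal := Finset.univ.sup
    (fun σ : Fin m → {i // i ∈ s} => ‖Stmt11Aux.wordL L m (fun j => (σ j).1)‖₊) with hcdef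
  have hc1 : c < 1 := by
    rw [hcdef, Finset.sup_lt_iff (by norm_num : (⊥ : NNReal) < 1)]
    intro σ _
    have h := hmlt (fun j => (σ j).1)
    rw [← coe_nnnorm] at h
    exact_mod_cast h
  have hc1' : (c : ℝ) < 1 := by exact_mod_cast hc1
  have hwlip : ∀ σ : Fin m → {i // i ∈ s}, LipschitzWith c (Stmt11Aux.wordMap g m σ) := by
    intro σ
    rw [hgdef, Stmt11Aux.wordMap_subtype, hcdef]
    exact (Stmt11Aux.wordMap_lipschitz L a f hf m _).weaken
      (Finset.le_sup (f := fun σ : Fin m → {i // i ∈ s} =>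
        ‖Stmt11Aux.wordL L m fun j => (σ j).1‖₊) (Finset.mem_univ σ))
  set T : NonemptyCompacts (EuclideanSpace ℝ (Fin d)) →
      NonemptyCompacts (EuclideanSpace ℝ (Fin d)) :=
    fun X => ⟨⟨hutch g X, Stmt11Aux.hutch_isCompact g hgc X.isCompact⟩,
      Stmt11Aux.hutch_nonempty g X.nonempty⟩ with hTdef
  have hTcoe : ∀ X, ((T X : NonemptyCompacts _) : Set _) = hutch g (X : Set _) := fun _ => rfl
  have hTiter : ∀ (n : ℕ) X,
      ((T^[n] X : NonemptyCompacts _) : Set _) = (hutch g)^[n] (X : Set _) := by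
    intro n
    induction n with
    | zero => intro X; rfl
    | succ n ih =>
      intro X
      rw [Function.iterate_succ_apply', Function.iterate_succ_apply', hTcoe, ih]
  have hTm : ∀ X : NonemptyCompacts (EuclideanSpace ℝ (Fin d)),
      ((T^[m] X : NonemptyCompacts _) : Set _) =
      hutch (fun σ : Fin m → {i // i ∈ s} => Stmt11Aux.wordMap g m σ) (X : Set _) := by
    intro X
    rw [hTiter, Stmt11Aux.hutch_iterate]
    rfl
  have hlipTm : LipschitzWith c (T^[m]) := by
    intro X Y
    have h1 : edist (T^[m] X) (T^[m] Y) =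
        EMetric.hausdorffEdist (T^[m] X : Set (EuclideanSpace ℝ (Fin d)))
          (T^[m] Y : Set (EuclideanSpace ℝ (Fin d))) := rfl
    have h2 : edist X Y = EMetric.hausdorffEdist (X : Set (EuclideanSpace ℝ (Fin d)))
        (Y : Set (EuclideanSpace ℝ (Fin d))) := rfl
    rw [h1, h2, hTm, hTm]
    exact Stmt11Aux.hutch_edist_le _ hwlip X.isCompact Y.isCompact X.nonempty Y.nonempty
  have hcontr : ContractingWith c (T^[m]) := ⟨hc1, hlipTm⟩
  haveI : Nonempty (NonemptyCompacts (EuclideanSpace ℝ (Fin d))) :=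
    ⟨⟨⟨{0}, isCompact_singleton⟩, Set.singleton_nonempty 0⟩⟩
  set Bc := ContractingWith.fixedPoint (T^[m]) hcontr with hBcdef
  have hfix : T^[m] Bc = Bc := hcontr.fixedPoint_isFixedPt
  have hqbound : ∀ (k : ℕ) (Y : NonemptyCompacts (EuclideanSpace ℝ (Fin d))),
      dist ((T^[m])^[k] Y) Bc ≤ (c : ℝ)^k * dist Y Bc := by
    intro k
    induction k with
    | zero => intro Y; simp
    | succ k ih =>
      intro Y
      rw [Function.iterate_succ_apply]
      calc dist ((T^[m])^[k] (T^[m] Y)) Bc ≤ (c : ℝ)^k * dist (T^[m] Y) Bc := ih _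
        _ ≤ (c : ℝ)^k * ((c : ℝ) * dist Y Bc) := by
            have hstep : dist (T^[m] Y) Bc ≤ (c : ℝ) * dist Y Bc := by
              conv_lhs => rw [← hfix]
              exact hlipTm.dist_le_mul Y Bc
            exact mul_le_mul_of_nonneg_left hstep (pow_nonneg c.coe_nonneg _)
        _ = (c : ℝ)^(k+1) * dist Y Bc := by ring
  have hconv : ∀ X : NonemptyCompacts (EuclideanSpace ℝ (Fin d)),
      Tendsto (fun n => dist (T^[n] X) Bc) atTop (nhds 0) := by
    intro X
    set D : ℝ := (Finset.range m).sup' ⟨0, Finset.mem_range.2 hm0⟩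
      (fun r => dist (T^[r] X) Bc) with hDdef
    have hbound : ∀ n, dist (T^[n] X) Bc ≤ (c : ℝ)^(n / m) * D := by
      intro n
      have hn : m * (n / m) + n % m = n := Nat.div_add_mod n m
      have h1 : T^[n] X = (T^[m])^[n / m] (T^[n % m] X) := by
        conv_lhs => rw [← hn]
        rw [Function.iterate_add_apply, Function.iterate_mul]
      rw [h1]
      calc dist ((T^[m])^[n / m] (T^[n % m] X)) Bc
          ≤ (c : ℝ)^(n / m) * dist (T^[n % m] X) Bc := hqbound _ _
        _ ≤ (c : ℝ)^(n / m) * D := by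
            apply mul_le_mul_of_nonneg_left _ (pow_nonneg c.coe_nonneg _)
            exact Finset.le_sup' (f := fun r => dist (T^[r] X) Bc)
              (Finset.mem_range.2 (Nat.mod_lt n hm0))
    have hdiv : Tendsto (fun n : ℕ => n / m) atTop atTop := by
      apply tendsto_atTop_atTop.2
      intro b
      refine ⟨m * b, fun n hn => (Nat.le_div_iff_mul_le hm0).2 ?_⟩
      exact le_trans (le_of_eq (mul_comm b m)) hn
    have hgeo : Tendsto (fun n : ℕ => (c : ℝ)^(n / m) * D) atTop (nhds 0) := by
      have h := ((tendsto_pow_atTop_nhds_zero_of_lt_one c.coe_nonneg hc1').comp hdiv).mul_const D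
      simpa using h
    exact squeeze_zero (fun n => dist_nonneg) hbound hgeo
  refine ⟨(Bc : Set _), ⟨Bc.nonempty, Bc.isCompact, ?_⟩, ?_⟩
  · intro K hKn hKc
    have h := hconv ⟨⟨K, hKc⟩, hKn⟩
    have heq : ∀ n : ℕ, hausdorffDist ((hutch fun i : {i // i ∈ s} => f i.1)^[n] K)
        (Bc : Set _) = dist (T^[n] ⟨⟨K, hKc⟩, hKn⟩) Bc := by
      intro n
      rw [NonemptyCompacts.dist_eq, hTiter]
      rfl
    exact (tendsto_congr heq).2 h
  · intro b hb
    have hGA := hconv ⟨⟨A, Acomp⟩, Ane⟩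
    have hFA := Atend A Ane Acomp
    have hsub : ∀ n : ℕ, ((T^[n] (⟨⟨A, Acomp⟩, Ane⟩ : NonemptyCompacts _) :
        NonemptyCompacts _) : Set _) ⊆ (hutch f)^[n] A := by
      intro n
      rw [hTiter]
      induction n with
      | zero => exact subset_rfl
      | succ n ih =>
        rw [Function.iterate_succ_apply', Function.iterate_succ_apply']
        intro x hx
        simp only [hutch, mem_iUnion, mem_image] at hx
        obtain ⟨i, k, hk, rfl⟩ := hx
        exact mem_iUnion.2 ⟨i.1, mem_image_of_mem _ (ih hk)⟩
    have hFc : ∀ n : ℕ, IsCompact ((hutch f)^[n] A) ∧ ((hutch f)^[n] A).Nonempty :=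
      fun n => Stmt11Aux.hutch_iterate_compact f hfc n Acomp Ane
    have hkey : ∀ n : ℕ, infDist b A ≤
        dist (T^[n] (⟨⟨A, Acomp⟩, Ane⟩ : NonemptyCompacts _)) Bc
          + hausdorffDist ((hutch f)^[n] A) A := by
      intro n
      set Gn := ((T^[n] (⟨⟨A, Acomp⟩, Ane⟩ : NonemptyCompacts _) :
        NonemptyCompacts _) : Set (EuclideanSpace ℝ (Fin d))) with hGndef
      have hGn_ne : Gn.Nonempty := (T^[n] ⟨⟨A, Acomp⟩, Ane⟩).nonempty
      have hGn_c : IsCompact Gn := (T^[n] ⟨⟨A, Acomp⟩, Ane⟩).isCompact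
      have h1 : infDist b Gn ≤ hausdorffDist (Bc : Set _) Gn :=
        infDist_le_hausdorffDist_of_mem hb
          (hausdorffEdist_ne_top_of_nonempty_of_bounded Bc.nonempty hGn_ne
            Bc.isCompact.isBounded hGn_c.isBounded)
      have h2 : infDist b ((hutch f)^[n] A) ≤ infDist b Gn :=
        infDist_le_infDist_of_subset (hsub n) hGn_ne
      have h3 : infDist b A ≤ infDist b ((hutch f)^[n] A)
          + hausdorffDist ((hutch f)^[n] A) A :=
        infDist_le_infDist_add_hausdorffDist
          (hausdorffEdist_ne_top_of_nonempty_of_bounded (hFc n).2 Ane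
            (hFc n).1.isBounded Acomp.isBounded)
      have h4 : hausdorffDist (Bc : Set _) Gn
          = dist (T^[n] (⟨⟨A, Acomp⟩, Ane⟩ : NonemptyCompacts _)) Bc := by
        rw [NonemptyCompacts.dist_eq, hausdorffDist_comm]
      linarith
    have hlim : Tendsto (fun n : ℕ =>
        dist (T^[n] (⟨⟨A, Acomp⟩, Ane⟩ : NonemptyCompacts _)) Bc
          + hausdorffDist ((hutch f)^[n] A) A) atTop (nhds 0) := by
      simpa using hGA.add hFA
    have hle : infDist b A ≤ 0 := ge_of_tendsto hlim (Eventually.of_forall hkey)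
    exact (Acomp.isClosed.mem_iff_infDist_zero Ane).2
      (le_antisymm hle infDist_nonneg)
end

section
/- Let F_t be a bounded one-parameter family on ℝ^d, with attractor A_t for t ∈ [0, t_0), and let K_t denote the convex hull of A_t. Then K_s ⊆ K_t for all 0 ≤ s ≤ t < t_0; moreover K_t is the smallest convex compact set K such that F_t(K) ⊆ K. -/
open Metric Filter Set
open scoped RealInnerProductSpace

open EMetric Bornology

section Aux
variable {ι E : Type*} [MetricSpace E]

lemma hutch_mono (f : ι → E → E) {S T : Set E} (h : S ⊆ T) : hutch f S ⊆ hutch f T :=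
  Set.iUnion_mono fun i => Set.image_mono h

lemma hutch_nonempty_s19 [Nonempty ι] (f : ι → E → E) {S : Set E} (h : S.Nonempty) :
    (hutch f S).Nonempty := by
  obtain ⟨x, hx⟩ := h
  exact ⟨f (Classical.arbitrary ι) x, Set.mem_iUnion.2 ⟨_, Set.mem_image_of_mem _ hx⟩⟩

lemma hutch_compact [Finite ι] {f : ι → E → E} (hf : ∀ i, Continuous (f i)) {S : Set E}
    (h : IsCompact S) : IsCompact (hutch f S) :=
  isCompact_iUnion fun i => h.image (hf i)

lemma hutch_iter_nonempty [Nonempty ι] (f : ι → E → E) {S : Set E} (h : S.Nonempty) (n : ℕ) :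
    ((hutch f)^[n] S).Nonempty := by
  induction n with
  | zero => exact h
  | succ n ih => rw [Function.iterate_succ_apply']; exact hutch_nonempty_s19 f ih

lemma hutch_iter_compact [Finite ι] {f : ι → E → E} (hf : ∀ i, Continuous (f i)) {S : Set E}
    (h : IsCompact S) (n : ℕ) : IsCompact ((hutch f)^[n] S) := by
  induction n with
  | zero => exact h
  | succ n ih => rw [Function.iterate_succ_apply']; exact hutch_compact hf ih

lemma hutch_hausdorffDist_le [Finite ι] [Nonempty ι] {f : ι → E → E} {C : ℝ} (hC : 0 ≤ C)
    (hf : ∀ i x y, dist (f i x) (f i y) ≤ C * dist x y)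
    {S T : Set E} (hS : S.Nonempty) (hSc : IsCompact S) (hT : T.Nonempty) (hTc : IsCompact T) :
    hausdorffDist (hutch f S) (hutch f T) ≤ C * hausdorffDist S T := by
  have hfin : hausdorffEdist S T ≠ ⊤ :=
    hausdorffEdist_ne_top_of_nonempty_of_bounded hS hT hSc.isBounded hTc.isBounded
  have hfin' : hausdorffEdist T S ≠ ⊤ :=
    hausdorffEdist_ne_top_of_nonempty_of_bounded hT hS hTc.isBounded hSc.isBounded
  apply hausdorffDist_le_of_mem_dist (mul_nonneg hC hausdorffDist_nonneg)
  · rintro x hx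
    obtain ⟨i, s, hs, rfl⟩ : ∃ i s, s ∈ S ∧ f i s = x := by
      simpa [hutch, Set.mem_iUnion] using hx
    obtain ⟨y, hy, hyd⟩ := hTc.exists_infDist_eq_dist hT s
    refine ⟨f i y, Set.mem_iUnion.2 ⟨i, Set.mem_image_of_mem _ hy⟩, ?_⟩
    calc dist (f i s) (f i y) ≤ C * dist s y := hf i s y
      _ = C * infDist s T := by rw [hyd]
      _ ≤ C * hausdorffDist S T :=
        mul_le_mul_of_nonneg_left (infDist_le_hausdorffDist_of_mem hs hfin) hC
  · rintro x hx
    obtain ⟨i, s, hs, rfl⟩ : ∃ i s, s ∈ T ∧ f i s = x := by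
      simpa [hutch, Set.mem_iUnion] using hx
    obtain ⟨y, hy, hyd⟩ := hSc.exists_infDist_eq_dist hS s
    refine ⟨f i y, Set.mem_iUnion.2 ⟨i, Set.mem_image_of_mem _ hy⟩, ?_⟩
    calc dist (f i s) (f i y) ≤ C * dist s y := hf i s y
      _ = C * infDist s S := by rw [hyd]
      _ ≤ C * hausdorffDist S T := by
        rw [hausdorffDist_comm]
        exact mul_le_mul_of_nonneg_left (infDist_le_hausdorffDist_of_mem hs hfin') hC

/-- The attractor satisfies `hutch f A ⊆ A`. -/
lemma attractor_invariant [Finite ι] [Nonempty ι] {f : ι → E → E}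
    (hf : ∀ i, Continuous (f i)) {C : ℝ} (hC : 0 ≤ C)
    (hlip : ∀ i x y, dist (f i x) (f i y) ≤ C * dist x y)
    {A : Set E} (hA : IsAttractor f A) : hutch f A ⊆ A := by
  obtain ⟨hne, hcomp, htend⟩ := hA
  have hHne : (hutch f A).Nonempty := hutch_nonempty_s19 f hne
  have hHc : IsCompact (hutch f A) := hutch_compact hf hcomp
  have hiterne := hutch_iter_nonempty f hne
  have hiterc := hutch_iter_compact hf hcomp
  have key : ∀ n : ℕ, hausdorffDist (hutch f A) A ≤
      C * hausdorffDist ((hutch f)^[n] A) A + hausdorffDist ((hutch f)^[n + 1] A) A := by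
    intro n
    have fin1 : hausdorffEdist (hutch f A) ((hutch f)^[n + 1] A) ≠ ⊤ :=
      hausdorffEdist_ne_top_of_nonempty_of_bounded hHne (hiterne _) hHc.isBounded
        (hiterc _).isBounded
    calc hausdorffDist (hutch f A) A
        ≤ hausdorffDist (hutch f A) ((hutch f)^[n + 1] A)
          + hausdorffDist ((hutch f)^[n + 1] A) A := hausdorffDist_triangle fin1
      _ ≤ C * hausdorffDist ((hutch f)^[n] A) A + hausdorffDist ((hutch f)^[n + 1] A) A := by
          gcongr ?_ + _
          rw [Function.iterate_succ_apply']
          have := hutch_hausdorffDist_le hC hlip hne hcomp (hiterne n) (hiterc n)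
          rwa [hausdorffDist_comm (s := A)] at this
  have h0 : Tendsto (fun n : ℕ => hausdorffDist ((hutch f)^[n] A) A) atTop (nhds 0) :=
    htend A hne hcomp
  have h1 : Tendsto (fun n : ℕ =>
      C * hausdorffDist ((hutch f)^[n] A) A + hausdorffDist ((hutch f)^[n + 1] A) A)
      atTop (nhds 0) := by
    have h2 : Tendsto (fun n : ℕ => hausdorffDist ((hutch f)^[n + 1] A) A) atTop (nhds 0) :=
      h0.comp (tendsto_add_atTop_nat 1)
    simpa using (h0.const_mul C).add h2
  have hle : hausdorffDist (hutch f A) A ≤ 0 := ge_of_tendsto' h1 key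
  intro x hx
  have : infDist x A ≤ hausdorffDist (hutch f A) A :=
    infDist_le_hausdorffDist_of_mem hx
      (hausdorffEdist_ne_top_of_nonempty_of_bounded hHne hne hHc.isBounded hcomp.isBounded)
  have hx0 : infDist x A = 0 := le_antisymm (this.trans hle) infDist_nonneg
  exact (hcomp.isClosed.mem_iff_infDist_zero hne).2 hx0

/-- The attractor is contained in any nonempty compact invariant set. -/
lemma attractor_subset [Nonempty ι] {f : ι → E → E} {A K : Set E}
    (hA : IsAttractor f A) (hKne : K.Nonempty) (hKc : IsCompact K)
    (hK : hutch f K ⊆ K) : A ⊆ K := by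
  obtain ⟨hne, hcomp, htend⟩ := hA
  have hsub : ∀ n : ℕ, (hutch f)^[n] K ⊆ K := by
    intro n
    induction n with
    | zero => exact subset_rfl
    | succ n ih =>
      rw [Function.iterate_succ_apply']
      exact (hutch_mono f ih).trans hK
  intro x hx
  have key : ∀ n : ℕ, infDist x K ≤ hausdorffDist ((hutch f)^[n] K) A := by
    intro n
    have hne' : ((hutch f)^[n] K).Nonempty := hutch_iter_nonempty f hKne n
    have hbd : IsBounded ((hutch f)^[n] K) := hKc.isBounded.subset (hsub n)
    have fin : hausdorffEdist A ((hutch f)^[n] K) ≠ ⊤ :=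
      hausdorffEdist_ne_top_of_nonempty_of_bounded hne hne' hcomp.isBounded hbd
    calc infDist x K ≤ infDist x ((hutch f)^[n] K) := infDist_le_infDist_of_subset (hsub n) hne'
      _ ≤ hausdorffDist A ((hutch f)^[n] K) := infDist_le_hausdorffDist_of_mem hx fin
      _ = hausdorffDist ((hutch f)^[n] K) A := hausdorffDist_comm
  have hle : infDist x K ≤ 0 := ge_of_tendsto' (htend K hKne hKc) key
  exact (hKc.isClosed.mem_iff_infDist_zero hKne).2 (le_antisymm hle infDist_nonneg)

/-- A fixed point of one of the maps belongs to the attractor. -/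
lemma fixedPoint_mem_attractor [Finite ι] {f : ι → E → E} (hf : ∀ i, Continuous (f i))
    {A : Set E} (hA : IsAttractor f A) {i : ι} {x : E} (hx : f i x = x) : x ∈ A := by
  obtain ⟨hne, hcomp, htend⟩ := hA
  have hmem : ∀ n : ℕ, x ∈ (hutch f)^[n] {x} := by
    intro n
    induction n with
    | zero => exact Set.mem_singleton x
    | succ n ih =>
      rw [Function.iterate_succ_apply']
      exact Set.mem_iUnion.2 ⟨i, ⟨x, ih, hx⟩⟩
  have key : ∀ n : ℕ, infDist x A ≤ hausdorffDist ((hutch f)^[n] {x}) A := by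
    intro n
    have hc : IsCompact ((hutch f)^[n] {x}) := hutch_iter_compact hf isCompact_singleton n
    have hne' : ((hutch f)^[n] {x}).Nonempty := ⟨x, hmem n⟩
    exact infDist_le_hausdorffDist_of_mem (hmem n)
      (hausdorffEdist_ne_top_of_nonempty_of_bounded hne' hne hc.isBounded hcomp.isBounded)
  have hle : infDist x A ≤ 0 :=
    ge_of_tendsto' (htend {x} ⟨x, rfl⟩ isCompact_singleton) key
  exact (hcomp.isClosed.mem_iff_infDist_zero hne).2 (le_antisymm hle infDist_nonneg)

lemma isCompact_convexHull_of_isCompact {d : ℕ} {s : Set (EuclideanSpace ℝ (Fin d))}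
    (hs : IsCompact s) : IsCompact (convexHull ℝ s) := by
  classical
  rcases s.eq_empty_or_nonempty with rfl | ⟨x₀, hx₀⟩
  · simp
  have hDc : IsCompact ((stdSimplex ℝ (Fin (d + 1))) ×ˢ (Set.univ.pi fun _ : Fin (d + 1) => s)) :=
    (isCompact_stdSimplex ℝ _).prod (isCompact_univ_pi fun _ => hs)
  have hcont : Continuous fun p : (Fin (d + 1) → ℝ) × (Fin (d + 1) → EuclideanSpace ℝ (Fin d)) =>
      ∑ i, p.1 i • p.2 i := by
    refine continuous_finset_sum _ fun i _ => ?_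
    exact ((continuous_apply i).comp continuous_fst).smul ((continuous_apply i).comp continuous_snd)
  have himg : (fun p : (Fin (d + 1) → ℝ) × (Fin (d + 1) → EuclideanSpace ℝ (Fin d)) =>
        ∑ i, p.1 i • p.2 i) '' ((stdSimplex ℝ (Fin (d + 1))) ×ˢ (Set.univ.pi fun _ : Fin (d + 1) => s))
      = convexHull ℝ s := by
    apply Subset.antisymm
    · rintro _ ⟨⟨w, z⟩, ⟨hw, hz⟩, rfl⟩
      exact (convex_convexHull ℝ s).sum_mem (fun i _ => hw.1 i) hw.2
        (fun i _ => subset_convexHull ℝ s (hz i (mem_univ i)))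
    · intro x hx
      obtain ⟨ι, hfin, z, w, hzs, hai, hwpos, hw1, hwz⟩ :=
        eq_pos_convex_span_of_mem_convexHull hx
      letI := hfin
      have hcard : Fintype.card ι ≤ d + 1 := by
        have h1 := hai.card_le_finrank_succ
        have h2 : Module.finrank ℝ (vectorSpan ℝ (Set.range z)) ≤ d := by
          have h3 := Submodule.finrank_le (vectorSpan ℝ (Set.range z))
          rwa [finrank_euclideanSpace_fin] at h3
        omega
      let e : ι → Fin (d + 1) := fun i => Fin.castLE (by simpa using hcard) (Fintype.equivFin ι i)
      have he : Function.Injective e :=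
        (Fin.castLE_injective _).comp (Fintype.equivFin ι).injective
      have hw'e : ∀ i, Function.extend e w 0 (e i) = w i := fun i => he.extend_apply w 0 i
      have hz'e : ∀ i, Function.extend e z (fun _ => x₀) (e i) = z i :=
        fun i => he.extend_apply z _ i
      have hw'0 : ∀ j, j ∉ Finset.univ.image e → Function.extend e w 0 j = 0 := by
        intro j hj
        rw [Function.extend_def]
        split_ifs with h
        · exact absurd (Finset.mem_image.2 ⟨h.choose, Finset.mem_univ _, h.choose_spec⟩) hj
        · rfl
      refine ⟨⟨Function.extend e w 0, Function.extend e z fun _ => x₀⟩, ⟨⟨?_, ?_⟩, ?_⟩, ?_⟩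
      · intro j
        show 0 ≤ Function.extend e w 0 j
        rw [Function.extend_def]
        split_ifs with h
        · exact (hwpos _).le
        · exact le_rfl
      · show ∑ j, Function.extend e w 0 j = 1
        calc ∑ j, Function.extend e w 0 j
            = ∑ j ∈ Finset.univ.image e, Function.extend e w 0 j :=
              (Finset.sum_subset (Finset.subset_univ _) fun j _ hj => hw'0 j hj).symm
          _ = ∑ i, Function.extend e w 0 (e i) := Finset.sum_image (fun i _ j _ h => he h)
          _ = ∑ i, w i := Finset.sum_congr rfl fun i _ => hw'e i
          _ = 1 := hw1
      · intro j _
        show Function.extend e z (fun _ => x₀) j ∈ s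
        rw [Function.extend_def]
        split_ifs with h
        · exact hzs ⟨h.choose, rfl⟩
        · exact hx₀
      · show ∑ j, Function.extend e w 0 j • Function.extend e z (fun _ => x₀) j = x
        calc ∑ j, Function.extend e w 0 j • Function.extend e z (fun _ => x₀) j
            = ∑ j ∈ Finset.univ.image e,
                Function.extend e w 0 j • Function.extend e z (fun _ => x₀) j :=
              (Finset.sum_subset (Finset.subset_univ _) fun j _ hj => by
                rw [hw'0 j hj, zero_smul]).symm
          _ = ∑ i, Function.extend e w 0 (e i) • Function.extend e z (fun _ => x₀) (e i) :=
              Finset.sum_image (fun i _ j _ h => he h)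
          _ = ∑ i, w i • z i := Finset.sum_congr rfl fun i _ => by rw [hw'e i, hz'e i]
          _ = x := hwz
  rw [← himg]
  exact hDc.image hcont

end Aux

/-- Let `F_t` be a bounded one-parameter family on `ℝ^d` with attractor
`A_t` for `t ∈ [0, t₀)` and `K_t := conv A_t`. Then `K_s ⊆ K_t` whenever `0 ≤ s ≤ t < t₀`;
moreover `K_t` is the smallest nonempty convex compact set `K` with `F_t(K) ⊆ K`. -/
theorem stmt19 {d N : ℕ} (hN : 2 ≤ N)
    (L : Fin N → EuclideanSpace ℝ (Fin d) →L[ℝ] EuclideanSpace ℝ (Fin d))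
    (hL : ∀ i, Function.Bijective (L i))
    (r : Fin N → ℝ) (hr : ∀ i, 0 < r i)
    (hsim : ∀ (i : Fin N) (x : EuclideanSpace ℝ (Fin d)), ‖L i x‖ = r i * ‖x‖)
    (a q : Fin N → EuclideanSpace ℝ (Fin d))
    (hρ : 0 < jsr L)
    (hsemi : IsSemiLinearFamily L a q)
    (i₀ : Fin N) (hmax : ∀ i : Fin N, i ≠ i₀ → r i < r i₀)
    (A : ℝ → Set (EuclideanSpace ℝ (Fin d)))
    (hA : ∀ t : ℝ, 0 ≤ t → t < 1 / jsr L → IsAttractor (fam L a q t) (A t)) :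
    (∀ s t : ℝ, 0 ≤ s → s ≤ t → t < 1 / jsr L →
      convexHull ℝ (A s) ⊆ convexHull ℝ (A t)) ∧
    (∀ t : ℝ, 0 ≤ t → t < 1 / jsr L →
      hutch (fam L a q t) (convexHull ℝ (A t)) ⊆ convexHull ℝ (A t) ∧
      ∀ K : Set (EuclideanSpace ℝ (Fin d)), K.Nonempty → Convex ℝ K → IsCompact K →
        hutch (fam L a q t) K ⊆ K → convexHull ℝ (A t) ⊆ K) := by
  classical
  have hNpos : 0 < N := by omega
  haveI : Nonempty (Fin N) := ⟨⟨0, hNpos⟩⟩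
  have ht₀ : 0 < 1 / jsr L := one_div_pos.2 hρ
  -- continuity of the maps
  have hcont : ∀ (t : ℝ) (i : Fin N), Continuous (fam L a q t i) := by
    intro t i
    unfold fam
    fun_prop
  -- Lipschitz bound
  have hlip : ∀ (t : ℝ) (i : Fin N) (x y : EuclideanSpace ℝ (Fin d)),
      dist (fam L a q t i x) (fam L a q t i y) ≤ (|t| * ∑ j, ‖L j‖) * dist x y := by
    intro t i x y
    have hdiff : fam L a q t i x - fam L a q t i y = t • (L i) (x - y) := by
      simp only [fam, map_sub, smul_sub, smul_add]
      abel
    rw [dist_eq_norm, dist_eq_norm, hdiff, norm_smul, Real.norm_eq_abs]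
    calc |t| * ‖(L i) (x - y)‖ ≤ |t| * (‖L i‖ * ‖x - y‖) := by
          gcongr
          exact (L i).le_opNorm _
      _ = (|t| * ‖L i‖) * ‖x - y‖ := by ring
      _ ≤ (|t| * ∑ j, ‖L j‖) * ‖x - y‖ := by
          gcongr
          exact Finset.single_le_sum (fun j _ => norm_nonneg (L j)) (Finset.mem_univ i)
  have hCnn : ∀ t : ℝ, 0 ≤ |t| * ∑ j, ‖L j‖ := by
    intro t
    positivity
  -- from semi-linearity: `q i` is a common fixed point, i.e. `L i (q i) + a i = 0`
  have hfix : ∀ i, (L i) (q i) + a i = 0 := by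
    intro i
    obtain ⟨h, hh⟩ := hsemi i
    have h0q : h.symm 0 = q i := by
      obtain ⟨M₀, hM₀⟩ := hh 0 le_rfl ht₀
      have e1 := hM₀ (h.symm 0)
      simp [fam] at e1
      exact e1.symm
    set t₁ := (1 / jsr L) / 2 with ht₁def
    have ht₁pos : 0 < t₁ := by positivity
    have ht₁lt : t₁ < 1 / jsr L := by
      rw [ht₁def]
      linarith
    obtain ⟨M, hM⟩ := hh t₁ ht₁pos.le ht₁lt
    have e2 := hM (q i)
    have hq0 : h (q i) = 0 := by rw [← h0q, AffineEquiv.apply_symm_apply]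
    rw [hq0] at e2
    simp only [map_zero] at e2
    rw [h0q] at e2
    have e3 : t₁ • ((L i) (q i) + a i) = 0 := by
      have h4 : t₁ • ((L i) (q i) + a i) + q i = 0 + q i := by rw [zero_add]; exact e2
      exact add_right_cancel h4
    rcases smul_eq_zero.1 e3 with h' | h'
    · exact absurd h' ht₁pos.ne'
    · exact h'
  -- canonical form of the maps
  have hfam : ∀ (t : ℝ) (i : Fin N) (x : EuclideanSpace ℝ (Fin d)),
      fam L a q t i x = t • (L i) (x - q i) + q i := by
    intro t i x
    have hL : (L i) (q i) = -a i := eq_neg_of_add_eq_zero_left (hfix i)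
    simp only [fam, map_sub, hL, sub_neg_eq_add]
  -- invariance of the attractor
  have hinv : ∀ t : ℝ, 0 ≤ t → t < 1 / jsr L →
      hutch (fam L a q t) (A t) ⊆ A t := by
    intro t h0 h1
    exact attractor_invariant (hcont t) (hCnn t) (hlip t) (hA t h0 h1)
  -- the convex hull is invariant
  have hhull : ∀ t : ℝ, 0 ≤ t → t < 1 / jsr L →
      hutch (fam L a q t) (convexHull ℝ (A t)) ⊆ convexHull ℝ (A t) := by
    intro t h0 h1
    have himg : ∀ i : Fin N,
        fam L a q t i '' (convexHull ℝ (A t)) ⊆ convexHull ℝ (A t) := by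
      intro i
      let g : EuclideanSpace ℝ (Fin d) →ᵃ[ℝ] EuclideanSpace ℝ (Fin d) :=
        { toFun := fam L a q t i
          linear := t • (L i).toLinearMap
          map_vadd' := by
            intro p v
            simp only [fam, vadd_eq_add, map_add, smul_add, ContinuousLinearMap.coe_coe,
              LinearMap.smul_apply]
            abel }
      have hg : fam L a q t i '' (convexHull ℝ (A t)) = g '' (convexHull ℝ (A t)) := rfl
      rw [hg, AffineMap.image_convexHull]
      apply convexHull_min ?_ (convex_convexHull ℝ (A t))
      rintro z ⟨y, hy, rfl⟩
      refine subset_convexHull ℝ (A t) (hinv t h0 h1 ?_)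
      exact Set.mem_iUnion.2 ⟨i, Set.mem_image_of_mem _ hy⟩
    rintro x hx
    obtain ⟨i, y, hy, rfl⟩ : ∃ i y, y ∈ convexHull ℝ (A t) ∧ fam L a q t i y = x := by
      simpa [hutch, Set.mem_iUnion] using hx
    exact himg i (Set.mem_image_of_mem _ hy)
  -- minimality
  have hmin : ∀ t : ℝ, 0 ≤ t → t < 1 / jsr L →
      ∀ K : Set (EuclideanSpace ℝ (Fin d)), K.Nonempty → Convex ℝ K → IsCompact K →
        hutch (fam L a q t) K ⊆ K → convexHull ℝ (A t) ⊆ K := by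
    intro t h0 h1 K hKne hKconv hKc hK
    exact convexHull_min (attractor_subset (hA t h0 h1) hKne hKc hK) hKconv
  refine ⟨?_, fun t h0 h1 => ⟨hhull t h0 h1, hmin t h0 h1⟩⟩
  -- monotonicity
  intro s t hs hst h1
  rcases hst.eq_or_lt with rfl | hlt
  · exact subset_rfl
  have ht : 0 < t := lt_of_le_of_lt hs hlt
  have hs1 : s < 1 / jsr L := lt_trans hlt h1
  have hAt := hA t ht.le h1
  have hq : ∀ i, q i ∈ A t := by
    intro i
    refine fixedPoint_mem_attractor (hcont t) hAt (i := i) ?_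
    rw [hfam]
    simp
  have hKc : IsCompact (convexHull ℝ (A t)) := isCompact_convexHull_of_isCompact hAt.2.1
  have hKne : (convexHull ℝ (A t)).Nonempty := by
    obtain ⟨x, hx⟩ := hAt.1
    exact ⟨x, subset_convexHull ℝ (A t) hx⟩
  apply hmin s hs hs1 _ hKne (convex_convexHull ℝ (A t)) hKc
  rintro x hx
  obtain ⟨i, y, hy, rfl⟩ : ∃ i y, y ∈ convexHull ℝ (A t) ∧ fam L a q s i y = x := by
    simpa [hutch, Set.mem_iUnion] using hx
  have hcombo : fam L a q s i y = (1 - s / t) • q i + (s / t) • fam L a q t i y := by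
    rw [hfam, hfam, smul_add, smul_smul, div_mul_cancel₀ s ht.ne', sub_smul, one_smul]
    abel
  rw [hcombo]
  have hfmem : fam L a q t i y ∈ convexHull ℝ (A t) :=
    hhull t ht.le h1 (Set.mem_iUnion.2 ⟨i, Set.mem_image_of_mem _ hy⟩)
  have hdiv0 : 0 ≤ s / t := div_nonneg hs ht.le
  have hdiv1 : s / t ≤ 1 := div_le_one_of_le₀ hlt.le ht.le
  exact (convex_convexHull ℝ (A t)) (subset_convexHull ℝ (A t) (hq i)) hfmem
    (by linarith) hdiv0 (by ring)
end
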